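/- arXiv:1903.08765 — 4 statements merged into one kernel-verified Lean document; each statement's English description precedes it below -/
import Mathlib

section
/- Let B be a group and p ≥ 2 an integer, and let W = B ≀ C_p be the permutational wreath product of B with the cyclic group C_p acting on p points. An element (r_1, …, r_p) of the base group B^p lies in the commutator subgroup of W if and only if the product r_1 r_2 ⋯ r_p lies in the commutator subgroup B' of B. -/
/-- The cyclic shift action of `C_p = ZMod p` on the direct power `B^p`. -/
def cycShift (B : Type*) [Group B] (p : ℕ) :
    Multiplicative (ZMod p) →* MulAut (ZMod p → B) where
  toFun k := MulEquiv.arrowCongr (Equiv.addRight (Multiplicative.toAdd k)) (MulEquiv.refl B)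
  map_one' := by
    ext f i
    simp [MulEquiv.arrowCongr] <;> rfl
  map_mul' a b := by
    ext f i
    simp only [MulEquiv.arrowCongr, Equiv.coe_addRight, MulEquiv.coe_mk, Equiv.coe_fn_mk,
      MulEquiv.refl_apply, toAdd_mul, MulAut.mul_apply]
    congr 1
    simp only [Equiv.addRight_symm, Equiv.coe_addRight]
    abel

/-- The permutational wreath product `B ≀ C_p` with `C_p` acting on `p` points by cyclic shift. -/
abbrev Wr (B : Type*) [Group B] (p : ℕ) : Type _ :=
  (ZMod p → B) ⋊[cycShift B p] Multiplicative (ZMod p)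

namespace WrAux

variable {B : Type*} [Group B] {p : ℕ}

lemma cycShift_apply (k : Multiplicative (ZMod p)) (f : ZMod p → B) (j : ZMod p) :
    cycShift B p k f j = f (j - Multiplicative.toAdd k) := by
  simp [cycShift, MulEquiv.arrowCongr, sub_eq_add_neg]

lemma hom_commutator_eq_one {G M : Type*} [Group G] [CommGroup M] (g : G →* M) {x : G}
    (hx : x ∈ commutator G) : g x = 1 := by
  have hle : commutator G ≤ g.ker := by
    rw [commutator_def, Subgroup.commutator_le]
    intro a _ b _
    rw [MonoidHom.mem_ker, map_commutatorElement]
    exact commutatorElement_eq_one_iff_commute.mpr (mul_comm _ _)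
  exact hle hx

lemma prod_univ [NeZero p] {M : Type*} [CommMonoid M] (g : ZMod p → M) :
    ∏ i : ZMod p, g i = ((List.range p).map fun n : ℕ => g (n : ZMod p)).prod := by
  have h1 : ∏ i ∈ Finset.range p, g (i : ZMod p)
      = ((List.range p).map fun n : ℕ => g (n : ZMod p)).prod := rfl
  rw [← h1]
  refine Finset.prod_nbij' (fun a : ZMod p => a.val) (fun n : ℕ => (n : ZMod p)) ?_ ?_ ?_ ?_ ?_ <;>
    simp [ZMod.val_lt, ZMod.natCast_zmod_val, ZMod.val_cast_of_lt, Finset.mem_range]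
  exact fun a ha => Nat.mod_eq_of_lt ha

lemma hom_prod [NeZero p] {M : Type*} [CommGroup M] (g : B →* M) (r : ZMod p → B) :
    ∏ i : ZMod p, g (r i)
      = g (((List.range p).map fun n : ℕ => r (n : ZMod p)).prod) := by
  rw [prod_univ (fun i => g (r i)), map_list_prod, List.map_map]
  rfl

lemma mulSingle_decomp [NeZero p] (f : ZMod p → B) :
    f = ((List.range p).map fun n : ℕ => Pi.mulSingle (n : ZMod p) (f n)).prod := by
  have key : ∀ n, n ≤ p →
      (((List.range n).map fun m : ℕ => Pi.mulSingle ((m : ZMod p)) (f m)).prod)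
        = fun j : ZMod p => if j.val < n then f j else 1 := by
    intro n
    induction n with
    | zero => intro _; funext j; simp
    | succ n ih =>
      intro hn
      funext j
      rw [List.range_succ, List.map_append, List.prod_append, ih (by omega)]
      simp only [List.map_cons, List.map_nil, List.prod_cons, List.prod_nil, mul_one]
      rw [Pi.mul_apply]
      have hv : ((n : ZMod p)).val = n := ZMod.val_cast_of_lt (by omega)
      by_cases hj : j = (n : ZMod p)
      · subst hj
        rw [if_neg (by omega), Pi.mulSingle_eq_same, if_pos (by omega), one_mul]
      · have hval : j.val ≠ n := fun h => hj (by rw [← h, ZMod.natCast_zmod_val])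
        rw [Pi.mulSingle_eq_of_ne hj, mul_one]
        by_cases h2 : j.val < n
        · rw [if_pos h2, if_pos (by omega)]
        · rw [if_neg h2, if_neg (by omega)]
  funext j
  rw [key p le_rfl]
  simp [ZMod.val_lt]

open scoped commutatorElement in
lemma shift (i : ZMod p) (b : B) :
    Abelianization.of (SemidirectProduct.inl (φ := cycShift B p) (Pi.mulSingle i b))
      = Abelianization.of (SemidirectProduct.inl (φ := cycShift B p) (Pi.mulSingle 0 b)) := by
  set k : Multiplicative (ZMod p) := Multiplicative.ofAdd (-i) with hk
  have hφ : (cycShift B p k) (Pi.mulSingle i b) = Pi.mulSingle (0 : ZMod p) b := by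
    funext j
    rw [cycShift_apply]
    have harg : j - Multiplicative.toAdd k = j + i := by rw [hk]; simp [sub_neg_eq_add]
    rw [harg]
    by_cases hj : j = 0
    · subst hj; rw [zero_add, Pi.mulSingle_eq_same, Pi.mulSingle_eq_same]
    · rw [Pi.mulSingle_eq_of_ne (fun h => hj (by simpa using congrArg (· - i) h)),
        Pi.mulSingle_eq_of_ne hj]
  have key : (SemidirectProduct.inl (φ := cycShift B p) (Pi.mulSingle i b)) *
      (SemidirectProduct.inl (φ := cycShift B p) (Pi.mulSingle (0 : ZMod p) b))⁻¹
      = ⁅SemidirectProduct.inl (φ := cycShift B p) (Pi.mulSingle i b),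
         (SemidirectProduct.inr k : Wr B p)⁆ := by
    rw [commutatorElement_def, ← hφ, SemidirectProduct.inl_aut, map_inv]
    group
  have h1 : Abelianization.of (SemidirectProduct.inl (φ := cycShift B p) (Pi.mulSingle i b)) *
      (Abelianization.of (SemidirectProduct.inl (φ := cycShift B p)
        (Pi.mulSingle (0 : ZMod p) b)))⁻¹ = 1 := by
    rw [← map_inv, ← map_mul, key, map_commutatorElement]
    exact commutatorElement_eq_one_iff_commute.mpr (mul_comm _ _)
  exact mul_inv_eq_one.mp h1

lemma coe_list_norm (r : ZMod p → B) :
    ((List.range p).map fun i => r (i : ZMod p)).prod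
      = ((List.range p).map fun n : ℕ => r (n : ZMod p)).prod := by
  have h : ∀ (l : List ℕ),
      (l.flatMap fun a => (pure (Nat.cast a) : List (ZMod p)))
        = l.map (Nat.cast : ℕ → ZMod p) := by
    intro l
    induction l with
    | nil => rfl
    | cons a t ih => rw [List.flatMap_cons, ih]; rfl
  show (List.map _ ((List.range p).flatMap _)).prod = _
  rw [h, List.map_map]
  rfl

end WrAux

/-- An element `(r 0, …, r (p-1))` of the base group `B^p` of the wreath
product `W = B ≀ C_p` lies in the commutator subgroup of `W` iff the product
`r 0 * r 1 * ⋯ * r (p-1)` lies in the commutator subgroup of `B`. -/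
theorem base_mem_commutator_iff (B : Type*) [Group B] (p : ℕ) (hp : 2 ≤ p)
    (r : ZMod p → B) :
    SemidirectProduct.inl (φ := cycShift B p) r ∈ commutator (Wr B p) ↔
      ((List.range p).map fun i => r (i : ZMod p)).prod ∈ commutator B := by
  have : NeZero p := ⟨by omega⟩
  rw [WrAux.coe_list_norm r]
  set P := ((List.range p).map fun n : ℕ => r (n : ZMod p)).prod with hP
  let ψ : (ZMod p → B) →* Abelianization (Wr B p) :=
    (Abelianization.of).comp (SemidirectProduct.inl (φ := cycShift B p))
  let h : B →* Abelianization (Wr B p) :=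
    ψ.comp (MonoidHom.mulSingle (fun _ : ZMod p => B) 0)
  have hψ : ∀ f, ψ f = Abelianization.of (SemidirectProduct.inl (φ := cycShift B p) f) :=
    fun _ => rfl
  have stepA : ψ r = h P := by
    calc ψ r = ψ (((List.range p).map fun n : ℕ => Pi.mulSingle (n : ZMod p) (r n)).prod) := by
          rw [← WrAux.mulSingle_decomp r]
      _ = ((List.range p).map fun n : ℕ => ψ (Pi.mulSingle (n : ZMod p) (r (n : ZMod p)))).prod := by
          rw [map_list_prod, List.map_map]; rfl
      _ = ((List.range p).map fun n : ℕ => h (r (n : ZMod p))).prod := by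
          refine congrArg List.prod (List.map_congr_left fun n _ => ?_)
          exact WrAux.shift (n : ZMod p) (r (n : ZMod p))
      _ = h P := by rw [hP, map_list_prod, List.map_map]; rfl
  let β : (ZMod p → B) →* Abelianization B :=
    MonoidHom.mk' (fun f => ∏ i : ZMod p, Abelianization.of (f i))
      (fun f g => by simp [Finset.prod_mul_distrib])
  have cond : ∀ k : Multiplicative (ZMod p),
      β.comp ((cycShift B p k).toMonoidHom)
        = (MulAut.conj ((1 : Multiplicative (ZMod p) →* Abelianization B) k)).toMonoidHom.comp
          β := by
    intro k
    ext f
    simp only [MonoidHom.comp_apply, MulEquiv.coe_toMonoidHom, MulAut.conj_apply,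
      MonoidHom.one_apply, one_mul, inv_one, mul_one, MonoidHom.mk'_apply, β]
    calc ∏ i : ZMod p, Abelianization.of ((cycShift B p k) f i)
        = ∏ i : ZMod p, Abelianization.of (f (i - Multiplicative.toAdd k)) := by
          refine Finset.prod_congr rfl fun i _ => ?_
          rw [WrAux.cycShift_apply]
      _ = ∏ i : ZMod p, Abelianization.of (f i) :=
          Equiv.prod_comp (Equiv.subRight (Multiplicative.toAdd k))
            (fun j => Abelianization.of (f j))
  let π : Wr B p →* Abelianization B := SemidirectProduct.lift β 1 cond
  constructor
  · intro hmem
    have h1 : π (SemidirectProduct.inl (φ := cycShift B p) r) = 1 :=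
      WrAux.hom_commutator_eq_one π hmem
    rw [SemidirectProduct.lift_inl] at h1
    have h2 : (∏ i : ZMod p, Abelianization.of (r i)) = 1 := h1
    rw [WrAux.hom_prod Abelianization.of r] at h2
    exact (QuotientGroup.eq_one_iff _).mp h2
  · intro hmem
    have h1 : h P = 1 := WrAux.hom_commutator_eq_one h hmem
    have h2 : ψ r = 1 := by rw [stepA, h1]
    rw [hψ] at h2
    exact (QuotientGroup.eq_one_iff _).mp h2
end

section
/- For any prime p and integer k ≥ 2, the commutator width of a Sylow p-subgroup of the symmetric group S_{p^k} equals 1. -/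
open Finset

open scoped commutatorElement

namespace CWAux

/-! ### The wreath-product step -/

/-- exponent sequence: `E p k = 1 + p + ... + p^k`. -/
def E (p : ℕ) : ℕ → ℕ
  | 0 => 1
  | (k+1) => p * E p k + 1

lemma one_le_E (p k : ℕ) : 1 ≤ E p k := by
  cases k with
  | zero => simp [E]
  | succ k => show 1 ≤ p * E p k + 1; omega

variable (p : ℕ) [Fact p.Prime]

lemma E_closed (k : ℕ) : E p k = ∑ i ∈ range (k+1), p ^ i := by
  induction k with
  | zero => simp [E]
  | succ k ih =>
      rw [E, ih, Finset.sum_range_succ' (fun i => p ^ i) (k+1), Finset.mul_sum]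
      simp [pow_succ, mul_comm]

section Wreath

variable (B : Type) [Group B]

/-- The shift automorphism of `ZMod p → B`. -/
def shiftAut (s : ZMod p) : MulAut (ZMod p → B) where
  toFun v := fun i => v (i + s)
  invFun v := fun i => v (i - s)
  left_inv v := funext fun i => by simp
  right_inv v := funext fun i => by simp
  map_mul' v w := rfl

/-- The action of the top cyclic group on the base of the wreath product. -/
def phi : Multiplicative (ZMod p) →* MulAut (ZMod p → B) where
  toFun s := shiftAut p B s.toAdd
  map_one' := by ext v i; simp [shiftAut]
  map_mul' s t := by ext v i; simp [shiftAut, add_assoc]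

/-- The wreath product `B ≀ C_p`. -/
abbrev Wr := SemidirectProduct (ZMod p → B) (Multiplicative (ZMod p)) (phi p B)

@[simp] lemma phi_apply (s : Multiplicative (ZMod p)) (v : ZMod p → B) (i : ZMod p) :
    phi p B s v i = v (i + s.toAdd) := rfl

/-- partial products `dseq b n = b n * b (n-1) * ... * b 1`. -/
def dseq (b : ZMod p → B) : ℕ → B
  | 0 => 1
  | (n+1) => b (↑(n+1)) * dseq b n

lemma of_dseq (b : ZMod p → B) (n : ℕ) :
    Abelianization.of (dseq p B b n) =
      ∏ j ∈ range n, Abelianization.of (b (↑(j+1))) := by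
  induction n with
  | zero => simp [dseq]
  | succ n ih =>
      rw [dseq, map_mul, ih, Finset.prod_range_succ, mul_comm]

/-- The natural equivalence `Fin p ≃ ZMod p`. -/
def finZMod : Fin p ≃ ZMod p where
  toFun j := (j.val : ZMod p)
  invFun x := ⟨x.val, x.val_lt⟩
  left_inv j := by
    ext
    exact ZMod.val_cast_of_lt j.isLt
  right_inv x := ZMod.natCast_rightInverse x

lemma prod_zmod {M : Type*} [CommMonoid M] (F : ZMod p → M) :
    ∏ i : ZMod p, F i = ∏ j ∈ range p, F (↑j) := by
  rw [← Fin.prod_univ_eq_prod_range (fun j => F (↑j)) p]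
  exact (Fintype.prod_equiv (finZMod p) _ _ (fun j => rfl)).symm

/-- The abelianized product homomorphism. -/
def Phi : Wr p B →* (Abelianization B × Multiplicative (ZMod p)) where
  toFun g := (∏ i : ZMod p, Abelianization.of (g.left i), g.right)
  map_one' := by simp
  map_mul' g h := by
    refine Prod.ext ?_ rfl
    show (∏ i : ZMod p, Abelianization.of ((g * h).left i)) =
      (∏ i : ZMod p, Abelianization.of (g.left i)) *
        ∏ i : ZMod p, Abelianization.of (h.left i)
    have : ∀ i : ZMod p, (g * h).left i = g.left i * h.left (i + g.right.toAdd) := by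
      intro i; rw [SemidirectProduct.mul_left]; rfl
    simp only [this, map_mul, Finset.prod_mul_distrib]
    congr 1
    exact Fintype.prod_equiv (Equiv.addRight g.right.toAdd)
      (fun i => Abelianization.of (h.left (i + g.right.toAdd)))
      (fun i => Abelianization.of (h.left i)) (fun i => rfl)

theorem wr_cw (HB : ∀ g ∈ commutator B, ∃ a b : B, g = ⁅a, b⁆) :
    ∀ g ∈ commutator (Wr p B), ∃ a b : Wr p B, g = ⁅a, b⁆ := by
  classical
  have hp : p.Prime := Fact.out
  intro g hg
  have hker : Phi p B g = 1 := Abelianization.commutator_subset_ker (Phi p B) hg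
  have hright : g.right = 1 := congrArg Prod.snd hker
  have hprod : (∏ i : ZMod p, Abelianization.of (g.left i)) = 1 := congrArg Prod.fst hker
  set b : ZMod p → B := g.left with hb
  -- the product of the coordinates lies in the commutator subgroup
  have hc1 : Abelianization.of (b 0 * dseq p B b (p-1)) = 1 := by
    rw [map_mul, of_dseq, ← hprod, prod_zmod p]
    rw [show range p = range (p-1+1) by rw [Nat.sub_add_cancel hp.one_le]]
    rw [Finset.prod_range_succ' (fun j => Abelianization.of (b (↑j))) (p-1)]
    rw [mul_comm]
    norm_num
  have hcmem : b 0 * dseq p B b (p-1) ∈ commutator B :=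
    (QuotientGroup.eq_one_iff _).1 hc1
  obtain ⟨x, y, hxy⟩ := HB _ hcmem
  -- construct the two elements whose commutator is `g`
  set a : ZMod p → B := fun i => if i = 0 then x else 1 with ha
  set t : ZMod p → B := fun i => dseq p B b ((i - 1).val) * y with ht
  set σ : Multiplicative (ZMod p) := Multiplicative.ofAdd 1 with hσ
  refine ⟨⟨a, σ⟩, ⟨t, 1⟩, ?_⟩
  have hcomm : (⁅(⟨a, σ⟩ : Wr p B), (⟨t, 1⟩ : Wr p B)⁆ : Wr p B) =
      ⟨fun i => a i * t (i + 1) * (a i)⁻¹ * (t i)⁻¹, 1⟩ := by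
    ext i
    · show (⁅(⟨a, σ⟩ : Wr p B), (⟨t, 1⟩ : Wr p B)⁆ : Wr p B).left i = _
      simp only [commutatorElement_def, SemidirectProduct.mul_left,
        SemidirectProduct.mul_right, SemidirectProduct.inv_left,
        SemidirectProduct.inv_right, Pi.mul_apply, Pi.inv_apply, phi_apply]
      simp [hσ, mul_assoc]
    · show (⁅(⟨a, σ⟩ : Wr p B), (⟨t, 1⟩ : Wr p B)⁆ : Wr p B).right = 1
      simp [commutatorElement_def, SemidirectProduct.mul_right,
        SemidirectProduct.inv_right]
  rw [hcomm]
  -- now show `g` equals this element, coordinatewise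
  ext i
  · show b i = a i * t (i + 1) * (a i)⁻¹ * (t i)⁻¹
    by_cases hi : i = 0
    · subst hi
      have h1 : t (0 + 1) = y := by
        simp [ht, dseq]
      have h0 : t 0 = dseq p B b (p - 1) * y := by
        have hneg : ((0 : ZMod p) - 1).val = p - 1 := by
          have h2 : ((p - 1 : ℕ) : ZMod p) = (0 : ZMod p) - 1 := by
            rw [Nat.cast_sub hp.one_le, ZMod.natCast_self, Nat.cast_one]
          rw [← h2, ZMod.val_cast_of_lt (Nat.sub_lt hp.pos one_pos)]
        rw [ht]; simp only [hneg]
      have ha0 : a 0 = x := by simp [ha]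
      have hb0 : b 0 = ⁅x, y⁆ * (dseq p B b (p - 1))⁻¹ := by
        rw [← hxy]; group
      rw [h1, h0, ha0, hb0]; group
    · have hval : i.val ≠ 0 := fun h => hi ((ZMod.val_eq_zero i).1 h)
      have hm1 : i.val - 1 + 1 = i.val := Nat.succ_pred_eq_of_pos (Nat.pos_of_ne_zero hval)
      have hicast : ((i.val : ℕ) : ZMod p) = i := ZMod.natCast_rightInverse i
      have hsub : (i - 1 : ZMod p) = ((i.val - 1 : ℕ) : ZMod p) := by
        rw [Nat.cast_sub (Nat.one_le_iff_ne_zero.2 hval), hicast, Nat.cast_one]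
      have hsubval : (i - 1 : ZMod p).val = i.val - 1 := by
        rw [hsub, ZMod.val_cast_of_lt (lt_of_le_of_lt (Nat.sub_le _ _) i.val_lt)]
      have hadd : ((i + 1 : ZMod p) - 1) = i := by ring
      have hti1 : t (i + 1) = dseq p B b i.val * y := by
        rw [ht]; simp only [hadd, ZMod.natCast_val]
      have hti : t i = dseq p B b (i.val - 1) * y := by
        rw [ht]; simp only [hsubval]
      have hds : dseq p B b i.val = b i * dseq p B b (i.val - 1) := by
        conv_lhs => rw [← hm1]
        rw [dseq, hm1, hicast]
      rw [hti1, hti, ha]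
      simp only [if_neg hi]
      rw [hds]; group
  · show g.right = 1
    exact hright

theorem wr_nc (x : B) (hx : x ≠ 1) : ∃ a b : Wr p B, ⁅a, b⁆ ≠ 1 := by
  classical
  have hp : p.Prime := Fact.out
  haveI : Fact (1 < p) := ⟨hp.one_lt⟩
  set δ : ZMod p → B := fun i => if i = 0 then x else 1 with hδ
  refine ⟨⟨1, Multiplicative.ofAdd 1⟩, ⟨δ, 1⟩, fun h => ?_⟩
  have h0 : (⁅(⟨1, Multiplicative.ofAdd 1⟩ : Wr p B), (⟨δ, 1⟩ : Wr p B)⁆ : Wr p B).left 0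
      = δ 1 * (δ 0)⁻¹ := by
    simp only [commutatorElement_def, SemidirectProduct.mul_left,
      SemidirectProduct.mul_right, SemidirectProduct.inv_left,
      SemidirectProduct.inv_right, Pi.mul_apply, Pi.inv_apply, phi_apply]
    simp
  rw [h] at h0
  have : δ 1 * (δ 0)⁻¹ = 1 := by rw [← h0]; rfl
  have h1 : δ 1 = 1 := by simp [hδ, one_ne_zero]
  have h2 : δ 0 = x := by simp [hδ]
  rw [h1, h2] at this
  have hx1 : x⁻¹ = 1 := by simpa using this
  exact hx (inv_eq_one.mp hx1)

section Action

variable {X : Type} (ρ : B →* Equiv.Perm X)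

/-- the underlying function of the wreath action on `ZMod p × X`. -/
def wactFun (g : Wr p B) (z : ZMod p × X) : ZMod p × X :=
  (z.1 - g.right.toAdd, ρ (g.left (z.1 - g.right.toAdd)) z.2)

lemma wactFun_one (z : ZMod p × X) : wactFun p B ρ 1 z = z := by
  simp [wactFun]

lemma wactFun_mul (g h : Wr p B) (z : ZMod p × X) :
    wactFun p B ρ (g * h) z = wactFun p B ρ g (wactFun p B ρ h z) := by
  have h1 : (g * h).right.toAdd = g.right.toAdd + h.right.toAdd := rfl
  have h2 : ∀ i, (g * h).left i = g.left i * h.left (i + g.right.toAdd) := by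
    intro i; rw [SemidirectProduct.mul_left]; rfl
  refine Prod.ext ?_ ?_
  · show z.1 - (g * h).right.toAdd = z.1 - h.right.toAdd - g.right.toAdd
    rw [h1]; ring
  · show ρ ((g * h).left (z.1 - (g * h).right.toAdd)) z.2 =
      ρ (g.left (z.1 - h.right.toAdd - g.right.toAdd))
        (ρ (h.left (z.1 - h.right.toAdd)) z.2)
    rw [h2, h1, map_mul]
    have e1 : z.1 - (g.right.toAdd + h.right.toAdd) = z.1 - h.right.toAdd - g.right.toAdd := by
      ring
    have e2 : z.1 - h.right.toAdd - g.right.toAdd + g.right.toAdd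
        = z.1 - h.right.toAdd := by ring
    rw [Equiv.Perm.mul_apply, e1, e2]

/-- The wreath product acts on `ZMod p × X`. -/
def wperm : Wr p B →* Equiv.Perm (ZMod p × X) where
  toFun g :=
    { toFun := wactFun p B ρ g
      invFun := wactFun p B ρ g⁻¹
      left_inv := fun z => by
        rw [← wactFun_mul, inv_mul_cancel, wactFun_one]
      right_inv := fun z => by
        rw [← wactFun_mul, mul_inv_cancel, wactFun_one] }
  map_one' := Equiv.ext fun z => wactFun_one p B ρ z
  map_mul' g h := Equiv.ext fun z => wactFun_mul p B ρ g h z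

lemma wperm_injective (hne : Nonempty X) (hρ : Function.Injective ρ) :
    Function.Injective (wperm p B ρ) := by
  intro g h hgh
  have key : ∀ z : ZMod p × X, wactFun p B ρ g z = wactFun p B ρ h z := by
    intro z; exact congrFun (congrArg (fun (e : Equiv.Perm (ZMod p × X)) => e.toFun) hgh) z
  obtain ⟨x0⟩ := hne
  have hr : g.right = h.right := by
    have := congrArg Prod.fst (key (0, x0))
    simp only [wactFun] at this
    have : g.right.toAdd = h.right.toAdd := by
      have h2 : (0 : ZMod p) - g.right.toAdd = 0 - h.right.toAdd := this
      simpa using h2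
    exact Multiplicative.toAdd.injective this
  have hl : g.left = h.left := by
    funext i
    apply hρ
    apply Equiv.ext
    intro xx
    have := congrArg Prod.snd (key (i + g.right.toAdd, xx))
    simp only [wactFun, add_sub_cancel_right] at this
    rw [hr] at this
    simpa using this
  exact SemidirectProduct.ext hl hr

end Action

end Wreath

/-- A semidirect product is equivalent (as a type) to the product. -/
def sdpEquiv {N G : Type*} [Group N] [Group G] (φ : G →* MulAut N) :
    SemidirectProduct N G φ ≃ N × G where
  toFun x := (x.left, x.right)
  invFun x := ⟨x.1, x.2⟩
  left_inv x := rfl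
  right_inv x := rfl

instance sdpFintype {N G : Type*} [Group N] [Group G] [Fintype N] [Fintype G]
    (φ : G →* MulAut N) : Fintype (SemidirectProduct N G φ) :=
  Fintype.ofEquiv _ (sdpEquiv φ).symm

lemma card_sdp {N G : Type*} [Group N] [Group G] [Fintype N] [Fintype G]
    (φ : G →* MulAut N) :
    Fintype.card (SemidirectProduct N G φ) = Fintype.card N * Fintype.card G :=
  (Fintype.card_congr (sdpEquiv φ)).trans (Fintype.card_prod _ _)

/-- The Legendre-type computation. -/
lemma legendre (k : ℕ) :
    ((p ^ (k+1)).factorial).factorization p = E p k := by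
  have hp : p.Prime := Fact.out
  have key : ∀ m : ℕ, padicValNat p ((p ^ (m+1)).factorial) = ∑ i ∈ range (m+1), p ^ i := by
    intro m
    induction m with
    | zero =>
        have := padicValNat_factorial_mul (p := p) 1
        simpa using this
    | succ m ih =>
        have h1 : p ^ (m + 2) = p * p ^ (m + 1) := by ring
        rw [h1, padicValNat_factorial_mul, ih, Finset.sum_range_succ]
        simp [Finset.sum_range_succ]
  rw [Nat.factorization_def _ hp, key, ← E_closed]

/-- The tower of iterated wreath products realized in symmetric groups. -/
structure Tower (k : ℕ) : Type 1 where
  G : Type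
  [grp : Group G]
  [ft : Fintype G]
  X : Type
  [ftX : Fintype X]
  ρ : G →* Equiv.Perm X
  inj : Function.Injective ρ
  cardX : Fintype.card X = p ^ (k + 1)
  cardG : Fintype.card G = p ^ E p k
  cw : ∀ g ∈ commutator G, ∃ a b : G, g = ⁅a, b⁆
  nc : 1 ≤ k → ∃ a b : G, ⁅a, b⁆ ≠ 1

attribute [instance] Tower.grp Tower.ft Tower.ftX

/-- The base of the tower: the cyclic group of order p acting on itself. -/
def towerZero : Tower p 0 where
  G := Multiplicative (ZMod p)
  X := ZMod p
  ρ := { toFun := fun s => Equiv.subRight s.toAdd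
         map_one' := by ext i; simp
         map_mul' := fun s t => by
           ext i
           show i - (s.toAdd + t.toAdd) = (i - t.toAdd) - s.toAdd
           ring }
  inj := by
    intro s t hst
    have := congrFun (congrArg (fun (e : Equiv.Perm (ZMod p)) => e.toFun) hst) 0
    simp only [Equiv.subRight] at this
    have h2 : s.toAdd = t.toAdd := by simpa using this
    exact Multiplicative.toAdd.injective h2
  cardX := by simp [ZMod.card]
  cardG := by
    show Fintype.card (Multiplicative (ZMod p)) = p ^ E p 0
    simp [ZMod.card, E]
  cw := by
    intro g hg
    have : g = 1 := by
      have h1 : g ∈ (MonoidHom.id (Multiplicative (ZMod p))).ker :=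
        Abelianization.commutator_subset_ker _ hg
      simpa using h1
    exact ⟨1, 1, by simp [this]⟩
  nc := fun h => absurd h (by norm_num)

/-- The inductive step of the tower. -/
def towerSucc {k : ℕ} (T : Tower p k) : Tower p (k+1) where
  G := Wr p T.G
  X := ZMod p × T.X
  ρ := wperm p T.G T.ρ
  inj := by
    apply wperm_injective
    · have : 0 < Fintype.card T.X := by
        rw [T.cardX]
        exact pow_pos (Fact.out : p.Prime).pos _
      exact Fintype.card_pos_iff.mp this
    · exact T.inj
  cardX := by
    rw [Fintype.card_prod, ZMod.card, T.cardX]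
    ring
  cardG := by
    rw [card_sdp, Fintype.card_fun, T.cardG]
    have h2 : Fintype.card (Multiplicative (ZMod p)) = p := by simp [ZMod.card]
    rw [h2, ZMod.card, ← pow_mul]
    have h3 : E p (k+1) = p * E p k + 1 := rfl
    rw [h3, mul_comm (E p k) p]
    exact (pow_succ p (p * E p k)).symm
  cw := wr_cw p T.G T.cw
  nc := by
    intro _
    have hcard : 1 < Fintype.card T.G := by
      rw [T.cardG]
      exact one_lt_pow₀ (Fact.out : p.Prime).one_lt (Nat.one_le_iff_ne_zero.mp (one_le_E p k))
    haveI : Nontrivial T.G := Fintype.one_lt_card_iff_nontrivial.mp hcard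
    obtain ⟨x, hx⟩ := exists_ne (1 : T.G)
    exact wr_nc p T.G x hx

/-- The full tower. -/
def tower : ∀ k : ℕ, Tower p k
  | 0 => towerZero p
  | (k+1) => towerSucc p (tower k)

/-- Transport permutation groups along an equivalence of types. -/
def permCongrMulEquiv {α β : Type*} (e : α ≃ β) : Equiv.Perm α ≃* Equiv.Perm β :=
  { Equiv.permCongr e with
    map_mul' := fun f g => by
      ext x
      simp [Equiv.permCongr] }

end CWAux

/-- for a prime `p` and `k ≥ 2`, the commutator width of a Sylow
`p`-subgroup of the symmetric group `S_{p^k}` equals `1`: every element of its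
commutator subgroup is a single commutator, and the commutator subgroup is
nontrivial. -/
theorem cw_sylow_symm_eq_one (p k : ℕ) [Fact p.Prime] (hk : 2 ≤ k)
    (P : Sylow p (Equiv.Perm (Fin (p ^ k)))) :
    (∀ g ∈ commutator ↥P, ∃ a b : ↥P, g = ⁅a, b⁆) ∧ commutator ↥P ≠ ⊥ := by
  classical
  obtain ⟨j, rfl⟩ : ∃ j, k = j + 2 := ⟨k - 2, by omega⟩
  set T := CWAux.tower p (j+1) with hT
  have hcX : Fintype.card T.X = p ^ (j + 2) := T.cardX
  let eX : T.X ≃ Fin (p ^ (j+2)) := Fintype.equivFinOfCardEq hcX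
  let eP : Equiv.Perm T.X ≃* Equiv.Perm (Fin (p ^ (j+2))) := CWAux.permCongrMulEquiv eX
  let Q' : Subgroup (Equiv.Perm (Fin (p ^ (j+2)))) :=
    Subgroup.map eP.toMonoidHom T.ρ.range
  let eG : T.G ≃* Q' :=
    (MonoidHom.ofInjective T.inj).trans
      (Subgroup.equivMapOfInjective T.ρ.range eP.toMonoidHom eP.injective)
  have hcardQ : Nat.card Q'
      = p ^ ((Nat.card (Equiv.Perm (Fin (p ^ (j+2))))).factorization p) := by
    rw [Nat.card_eq_fintype_card (α := Equiv.Perm (Fin (p ^ (j+2)))), Fintype.card_perm,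
      Fintype.card_fin, CWAux.legendre p (j+1), ← Nat.card_congr eG.toEquiv,
      Nat.card_eq_fintype_card, T.cardG]
  let Q : Sylow p (Equiv.Perm (Fin (p ^ (j+2)))) := Sylow.ofCard Q' hcardQ
  obtain ⟨gq, hgq⟩ := MulAction.exists_smul_eq (Equiv.Perm (Fin (p ^ (j+2)))) Q P
  have hQP : (gq • Q).toSubgroup = P.toSubgroup := by rw [hgq]
  let e : ↥P ≃* T.G :=
    ((MulEquiv.subgroupCongr hQP).symm.trans (Q.equivSMul gq).symm).trans eG.symm
  constructor
  · intro g hg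
    have hmem : e g ∈ commutator T.G := by
      have hmap : (commutator ↥P).map e.toMonoidHom = commutator T.G := by
        rw [commutator_def, Subgroup.map_commutator, commutator_def,
          Subgroup.map_top_of_surjective _ e.surjective]
      rw [← hmap]
      exact Subgroup.mem_map_of_mem _ hg
    obtain ⟨a, b, hab⟩ := T.cw (e g) hmem
    refine ⟨e.symm a, e.symm b, ?_⟩
    have h4 : e.symm (e g) = e.symm ⁅a, b⁆ := congrArg e.symm hab
    rw [MulEquiv.symm_apply_apply] at h4
    rw [h4]
    simp [commutatorElement_def, map_mul, map_inv]
  · intro hbot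
    obtain ⟨a, b, hab⟩ := T.nc (Nat.succ_le_succ (Nat.zero_le j))
    have h1 : ⁅e.symm a, e.symm b⁆ ∈ commutator ↥P :=
      Subgroup.commutator_mem_commutator (Subgroup.mem_top _) (Subgroup.mem_top _)
    rw [hbot] at h1
    have h2 : ⁅e.symm a, e.symm b⁆ = 1 := Subgroup.mem_bot.mp h1
    apply hab
    have h3 := congrArg e h2
    simp only [commutatorElement_def, map_mul, map_inv, MulEquiv.apply_symm_apply,
      map_one] at h3
    exact h3
end

section
/- For k ≥ 2, the Frattini subgroup of a Sylow 2-subgroup of A_{2^k} equals its commutator subgroup: Φ(Syl_2 A_{2^k}) = (Syl_2 A_{2^k})'. -/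
open Subgroup

lemma abelianization_sq {G : Type*} [Group G]
    (hgen : Subgroup.closure {g : G | g * g = 1} = ⊤) (q : Abelianization G) : q * q = 1 := by
  have hsurj : Function.Surjective (Abelianization.of (G := G)) :=
    fun q => QuotientGroup.induction_on q fun g => ⟨g, rfl⟩
  have h1 : Subgroup.closure (Abelianization.of '' {g : G | g * g = 1}) = ⊤ := by
    rw [← MonoidHom.map_closure, hgen, ← MonoidHom.range_eq_map,
      MonoidHom.range_eq_top.mpr hsurj]
  have h2 : (⊤ : Subgroup (Abelianization G)) ≤ MonoidHom.ker (powMonoidHom 2) := by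
    rw [← h1]
    refine Subgroup.closure_le _ |>.mpr ?_
    rintro _ ⟨g, hg, rfl⟩
    simp only [SetLike.mem_coe, MonoidHom.mem_ker, powMonoidHom_apply, pow_two]
    rw [← map_mul, hg, map_one]
  have := h2 (Subgroup.mem_top q)
  simpa [powMonoidHom_apply, pow_two] using this

open scoped commutatorElement in
lemma frattini_eq_commutator_of_invgen {G : Type*} [Group G] [Finite G]
    (h2 : IsPGroup 2 G) (hgen : Subgroup.closure {g : G | g * g = 1} = ⊤) :
    frattini G = commutator G := by
  haveI : Fact (Nat.Prime 2) := ⟨by norm_num⟩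
  apply le_antisymm
  · -- frattini ≤ commutator
    intro x hx
    by_contra hxc
    set q : Abelianization G := Abelianization.of x with hqdef
    have hsurj : Function.Surjective (Abelianization.of (G := G)) :=
      fun q => QuotientGroup.induction_on q fun g => ⟨g, rfl⟩
    have hq1 : q ≠ 1 := by
      intro h
      exact hxc ((QuotientGroup.eq_one_iff x).mp h)
    -- a maximal element of subgroups not containing q
    obtain ⟨H, hHS, hHmax⟩ := Set.Finite.exists_maximalFor (id : Subgroup (Abelianization G) → _)
      {H : Subgroup (Abelianization G) | q ∉ H} (Set.toFinite _)
      ⟨⊥, by simpa [Subgroup.mem_bot] using hq1⟩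
    simp only [Set.mem_setOf_eq, id] at hHS hHmax
    replace hHmax : ∀ K : Subgroup (Abelianization G), q ∉ K → H ≤ K → H = K :=
      fun K h1 h2 => le_antisymm h2 (hHmax h1 h2)
    have hcoatom : IsCoatom H := by
      constructor
      · intro h; exact hHS (h ▸ Subgroup.mem_top q)
      · intro K hK
        have hqK : q ∈ K := by
          by_contra hq'
          exact hK.ne (hHmax K hq' hK.le)
        rw [eq_top_iff]
        intro r _
        by_cases hr : r ∈ H
        · exact hK.le hr
        · have hqmem : q ∈ H ⊔ Subgroup.zpowers r := by
            by_contra hq'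
            have := hHmax _ hq' le_sup_left
            rw [this] at hr
            exact hr (Subgroup.mem_sup_right (Subgroup.mem_zpowers r))
          rcases Subgroup.mem_sup.mp hqmem with ⟨y, hy, z, hz, hyz⟩
          rcases Subgroup.mem_zpowers_iff.mp hz with ⟨n, rfl⟩
          have hrr : r ^ (2 : ℤ) = 1 := by
            have := abelianization_sq hgen r
            rw [zpow_two, this]
          rcases Int.even_or_odd n with ⟨m, rfl⟩ | ⟨m, rfl⟩
          · exfalso
            have : r ^ (m + m) = 1 := by
              rw [← two_mul, zpow_mul, hrr, one_zpow]
            rw [this, mul_one] at hyz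
            exact hHS (hyz ▸ hy)
          · have : r ^ (2 * m + 1) = r := by
              rw [zpow_add, zpow_mul, hrr, one_zpow, one_mul, zpow_one]
            rw [this] at hyz
            have : r = y⁻¹ * q := by rw [← hyz]; group
            rw [this]
            exact mul_mem (hK.le (H.inv_mem hy)) hqK
    have hle := frattini_le_coatom (isCoatom_comap_of_surjective hsurj hcoatom)
    exact hHS (hle hx)
  · -- commutator ≤ frattini
    have key : ∀ M : Subgroup G, IsCoatom M → commutator G ≤ M := by
      intro M hM
      haveI : M.Normal := by
        refine NormalizerCondition.normal_of_coatom M ?_ hM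
        exact normalizerCondition_of_isNilpotent (h := h2.isNilpotent)
      -- the quotient is cyclic
      obtain ⟨g₀, hg₀⟩ : ∃ g₀ : G, g₀ ∉ M := by
        by_contra h
        push_neg at h
        exact hM.1 (Subgroup.eq_top_iff' M |>.mpr h)
      have hcyc : ∀ x : G ⧸ M, x ∈ Subgroup.zpowers ((g₀ : G ⧸ M)) := by
        have hcomap : Subgroup.comap (QuotientGroup.mk' M)
            (Subgroup.zpowers ((g₀ : G ⧸ M))) = ⊤ := by
          apply hM.2
          refine lt_of_le_of_ne ?_ ?_
          · intro m hm
            have : ((m : G ⧸ M)) = 1 := (QuotientGroup.eq_one_iff m).mpr hm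
            simp only [Subgroup.mem_comap, QuotientGroup.mk'_apply]
            rw [this]; exact one_mem _
          · intro h
            apply hg₀
            rw [h]
            exact Subgroup.mem_comap.mpr (Subgroup.mem_zpowers _)
        intro x
        have : Subgroup.zpowers ((g₀ : G ⧸ M)) = ⊤ := by
          have := congrArg (Subgroup.map (QuotientGroup.mk' M)) hcomap
          rwa [Subgroup.map_comap_eq_self_of_surjective (QuotientGroup.mk'_surjective M),
            Subgroup.map_top_of_surjective _ (QuotientGroup.mk'_surjective M)] at this
        rw [this]; trivial
      have hcomm : ∀ a b : G ⧸ M, a * b = b * a := by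
        intro a b
        obtain ⟨m, hm⟩ := hcyc a
        obtain ⟨n, hn⟩ := hcyc b
        rw [← hm, ← hn, ← zpow_add, ← zpow_add, add_comm]
      rw [_root_.commutator_def, Subgroup.commutator_le]
      intro a _ b _
      rw [← QuotientGroup.eq_one_iff]
      have : ((⁅a, b⁆ : G) : G ⧸ M) = ⁅(a : G ⧸ M), (b : G ⧸ M)⁆ := by
        simp [commutatorElement_def]
      rw [this, commutatorElement_eq_one_iff_commute]
      exact hcomm _ _
    show commutator G ≤ frattini G
    rw [frattini, Order.radical]
    exact le_iInf₂ key


open Equiv Subgroup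

namespace AltSyl

abbrev X (k : ℕ) := Fin k → Bool

variable {k : ℕ}

/-- zero out all bits at positions `≥ i`. -/
def trunc (i : Fin k) (x : X k) : X k := fun j => if j < i then x j else false

lemma trunc_apply_of_lt {i j : Fin k} (h : j < i) (x : X k) : trunc i x j = x j := if_pos h

lemma trunc_apply_of_not_lt {i j : Fin k} (h : ¬ j < i) (x : X k) : trunc i x j = false :=
  if_neg h

lemma trunc_eq_of_agree {i : Fin k} {x y : X k} (h : ∀ j, j < i → x j = y j) :
    trunc i x = trunc i y := by
  funext j
  by_cases hj : j < i
  · rw [trunc_apply_of_lt hj, trunc_apply_of_lt hj, h j hj]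
  · rw [trunc_apply_of_not_lt hj, trunc_apply_of_not_lt hj]

lemma trunc_idem (i : Fin k) (x : X k) : trunc i (trunc i x) = trunc i x := by
  funext j
  by_cases hj : j < i
  · rw [trunc_apply_of_lt hj]
  · rw [trunc_apply_of_not_lt hj, trunc_apply_of_not_lt hj]

lemma bool_xor_cancel : ∀ a b c d : Bool, xor a b = xor c d → b = d → a = c := by decide

lemma bool_xor_cancel' : ∀ a b c d : Bool, xor a b = xor c d → a = c → b = d := by decide

lemma bool_xor_xor : ∀ a b : Bool, xor (xor a b) b = a := by decide

/-- the carrier of the triangular group: permutations whose "flip pattern" at level `i`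
depends only on the bits below `i`. -/
def TriCarrier (k : ℕ) : Set (Perm (X k)) :=
  {π | ∀ (i : Fin k) (x y : X k), (∀ j, j < i → x j = y j) →
    xor (π x i) (x i) = xor (π y i) (y i)}

lemma agree_fwd {π : Perm (X k)} (hπ : π ∈ TriCarrier k) {i : Fin k} {x y : X k}
    (h : ∀ j, j < i → x j = y j) : ∀ j, j < i → π x j = π y j := by
  intro j hj
  have h1 : ∀ j', j' < j → x j' = y j' := fun j' hj' => h j' (hj'.trans hj)
  exact bool_xor_cancel _ _ _ _ (hπ j x y h1) (h j hj)

lemma agree_bwd {π : Perm (X k)} (hπ : π ∈ TriCarrier k) {i : Fin k} {x y : X k}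
    (h : ∀ j, j < i → π x j = π y j) : ∀ j, j < i → x j = y j := by
  have key : ∀ n : ℕ, ∀ (hn : n < k), (⟨n, hn⟩ : Fin k) < i → x ⟨n, hn⟩ = y ⟨n, hn⟩ := by
    intro n
    induction n using Nat.strong_induction_on with
    | _ n ih =>
      intro hn hni
      have hagree : ∀ j', j' < (⟨n, hn⟩ : Fin k) → x j' = y j' := by
        intro j' hj'
        have hj'n : j'.val < n := hj'
        have hj'i : j' < i := lt_trans hj' hni
        have := ih j'.val hj'n j'.isLt (by rw [Fin.lt_def]; exact hj'i)
        simpa using this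
      have e1 := hπ ⟨n, hn⟩ x y hagree
      have e2 := h ⟨n, hn⟩ hni
      exact bool_xor_cancel' _ _ _ _ e1 e2
  intro j hj
  have := key j.val j.isLt (by simpa using hj)
  simpa using this

lemma one_mem_tri : (1 : Perm (X k)) ∈ TriCarrier k := by
  intro i x y h
  simp [h i]

lemma mul_mem_tri {π τ : Perm (X k)} (hπ : π ∈ TriCarrier k) (hτ : τ ∈ TriCarrier k) :
    π * τ ∈ TriCarrier k := by
  intro i x y h
  have h1 : ∀ j, j < i → τ x j = τ y j := agree_fwd hτ h
  have e1 := hπ i (τ x) (τ y) h1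
  have e2 := hτ i x y h
  simp only [Perm.mul_apply]
  revert e1 e2
  generalize π (τ x) i = a; generalize τ x i = b; generalize x i = c
  generalize π (τ y) i = d; generalize τ y i = e; generalize y i = f
  revert a b c d e f; decide

lemma inv_mem_tri {π : Perm (X k)} (hπ : π ∈ TriCarrier k) : π⁻¹ ∈ TriCarrier k := by
  intro i x y h
  have h1 : ∀ j, j < i → π (π⁻¹ x) j = π (π⁻¹ y) j := by
    simpa using h
  have h2 : ∀ j, j < i → π⁻¹ x j = π⁻¹ y j := agree_bwd hπ h1
  have := hπ i (π⁻¹ x) (π⁻¹ y) h2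
  simp only [show ∀ z, π (π⁻¹ z) = z from fun z => π.apply_symm_apply z] at this
  revert this
  generalize π⁻¹ x i = a; generalize x i = b; generalize π⁻¹ y i = c; generalize y i = d
  revert a b c d; decide

/-- the triangular subgroup: a Sylow 2-subgroup of `Perm (X k)`. -/
def Tri (k : ℕ) : Subgroup (Perm (X k)) where
  carrier := TriCarrier k
  one_mem' := one_mem_tri
  mul_mem' := mul_mem_tri
  inv_mem' := inv_mem_tri


section Emap

/-- flip bit `i` when `h` of the truncation holds. -/
def flipBit (i : Fin k) (h : X k → Bool) (x : X k) : X k :=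
  fun j => if j = i then xor (x j) (h (trunc i x)) else x j

lemma flipBit_apply_ne (i : Fin k) (h : X k → Bool) (x : X k) {j : Fin k} (hj : j ≠ i) :
    flipBit i h x j = x j := if_neg hj

lemma flipBit_apply_self (i : Fin k) (h : X k → Bool) (x : X k) :
    flipBit i h x i = xor (x i) (h (trunc i x)) := if_pos rfl

lemma trunc_flipBit (i : Fin k) (h : X k → Bool) (x : X k) :
    trunc i (flipBit i h x) = trunc i x := by
  apply trunc_eq_of_agree
  intro j hj
  exact flipBit_apply_ne i h x (ne_of_lt hj)

lemma flipBit_invol (i : Fin k) (h : X k → Bool) (x : X k) :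
    flipBit i h (flipBit i h x) = x := by
  funext j
  by_cases hj : j = i
  · subst hj
    rw [flipBit_apply_self, trunc_flipBit, flipBit_apply_self, bool_xor_xor]
  · rw [flipBit_apply_ne i h _ hj, flipBit_apply_ne i h _ hj]

/-- the elementary involutions generating `Tri k`. -/
def Emap (i : Fin k) (h : X k → Bool) : Perm (X k) where
  toFun := flipBit i h
  invFun := flipBit i h
  left_inv := flipBit_invol i h
  right_inv := flipBit_invol i h

@[simp] lemma Emap_apply (i : Fin k) (h : X k → Bool) (x : X k) :
    Emap i h x = flipBit i h x := rfl

lemma Emap_mem_tri (i : Fin k) (h : X k → Bool) : Emap i h ∈ Tri k := by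
  intro j x y hagree
  by_cases hj : j = i
  · subst hj
    rw [Emap_apply, Emap_apply, flipBit_apply_self, flipBit_apply_self,
      trunc_eq_of_agree hagree]
    generalize x j = a; generalize y j = b; generalize h (trunc j y) = c
    revert a b c; decide
  · rw [Emap_apply, Emap_apply, flipBit_apply_ne i h _ hj, flipBit_apply_ne i h _ hj]
    simp

lemma Emap_mul (i : Fin k) (h₁ h₂ : X k → Bool) :
    Emap i h₁ * Emap i h₂ = Emap i (fun x => xor (h₁ x) (h₂ x)) := by
  apply Equiv.ext
  intro x
  funext j
  simp only [Perm.mul_apply, Emap_apply]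
  by_cases hj : j = i
  · subst hj
    rw [flipBit_apply_self, trunc_flipBit, flipBit_apply_self, flipBit_apply_self]
    generalize x j = a; generalize h₁ (trunc j x) = b; generalize h₂ (trunc j x) = c
    revert a b c; decide
  · rw [flipBit_apply_ne _ _ _ hj, flipBit_apply_ne _ _ _ hj, flipBit_apply_ne _ _ _ hj]

lemma Emap_false (i : Fin k) : Emap i (fun _ => false) = 1 := by
  apply Equiv.ext
  intro x
  funext j
  simp only [Emap_apply, Perm.one_apply]
  by_cases hj : j = i
  · subst hj; rw [flipBit_apply_self]; simp
  · rw [flipBit_apply_ne _ _ _ hj]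

lemma Emap_sq (i : Fin k) (h : X k → Bool) : Emap i h * Emap i h = 1 := by
  rw [Emap_mul]
  convert Emap_false i using 2
  simp

lemma Emap_congr (i : Fin k) {h₁ h₂ : X k → Bool}
    (h : ∀ x, h₁ (trunc i x) = h₂ (trunc i x)) : Emap i h₁ = Emap i h₂ := by
  apply Equiv.ext
  intro x
  funext j
  by_cases hj : j = i
  · subst hj
    simp only [Emap_apply, flipBit_apply_self]
    rw [h x]
  · simp only [Emap_apply]
    rw [flipBit_apply_ne _ _ _ hj, flipBit_apply_ne _ _ _ hj]

/-- the flip pattern of an element of `Tri k` only depends on the truncation. -/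
lemma tri_pattern {π : Perm (X k)} (hπ : π ∈ Tri k) (i : Fin k) (x : X k) :
    xor (π x i) (x i) = xor (π (trunc i x) i) (trunc i x i) := by
  apply hπ
  intro j hj
  exact (trunc_apply_of_lt hj x).symm

end Emap

section Counting

lemma bool_xor_cancel_right : ∀ a b c : Bool, xor a b = xor c b → a = c := by decide

lemma bool_xor_xor_left : ∀ a b : Bool, xor (xor a b) a = b := by decide
lemma bool_xor_recover : ∀ a b c d : Bool, xor a b = xor c d → xor b (xor c d) = a := by decide

/-- glue low bits `s` with high bits `f`. -/
def mixFun (i : Fin k) (s : X k) (f : Fin (k - i.val) → Bool) : X k :=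
  fun j => if hj : j < i then s j
    else f ⟨j.val - i.val, by rw [Fin.lt_def, not_lt] at hj; omega⟩

lemma trunc_mixFun (i : Fin k) (s : X k) (f : Fin (k - i.val) → Bool) :
    trunc i (mixFun i s f) = trunc i s := by
  funext j
  by_cases hj : j < i
  · rw [trunc_apply_of_lt hj, trunc_apply_of_lt hj, mixFun, dif_pos hj]
  · rw [trunc_apply_of_not_lt hj, trunc_apply_of_not_lt hj]

lemma mixFun_high (i : Fin k) (s : X k) (f : Fin (k - i.val) → Bool) (j : Fin (k - i.val)) :
    mixFun i s f ⟨i.val + j.val, by omega⟩ = f j := by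
  rw [mixFun, dif_neg]
  · congr 1
    apply Fin.ext
    simp
  · rw [Fin.lt_def, not_lt]
    simp

/-- splitting a bit string into the part below `i` and the rest. -/
def restEquiv (i : Fin k) (g : X k → Bool) :
    {x : X k // g (trunc i x) = true} ≃
      ({s : X k // trunc i s = s ∧ g s = true} × (Fin (k - i.val) → Bool)) where
  toFun x := ⟨⟨trunc i x.1, trunc_idem i x.1, x.2⟩, fun j => x.1 ⟨i.val + j.val, by omega⟩⟩
  invFun p := ⟨mixFun i p.1.1 p.2, by rw [trunc_mixFun, p.1.2.1]; exact p.1.2.2⟩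
  left_inv x := by
    apply Subtype.ext
    funext j
    by_cases hj : j < i
    · simp only [mixFun]
      rw [dif_pos hj, trunc_apply_of_lt hj]
    · simp only [mixFun]
      rw [dif_neg hj]
      rw [Fin.lt_def, not_lt] at hj
      exact congrArg x.1 (Fin.ext (by show i.val + (j.val - i.val) = j.val; omega))
  right_inv p := by
    refine Prod.ext ?_ ?_
    · apply Subtype.ext
      show trunc i (mixFun i p.1.1 p.2) = p.1.1
      rw [trunc_mixFun, p.1.2.1]
    · funext j
      exact mixFun_high i p.1.1 p.2 j

lemma count_card (i : Fin k) (g : X k → Bool) :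
    Fintype.card {x : X k // g (trunc i x) = true}
      = Fintype.card {s : X k // trunc i s = s ∧ g s = true} * 2 ^ (k - i.val) := by
  rw [Fintype.card_congr (restEquiv i g), Fintype.card_prod]
  congr 1
  simp

/-- the bit strings fixed by `trunc i` correspond to strings of length `i`. -/
def lowEquiv (i : Fin k) : {s : X k // trunc i s = s} ≃ (Fin i.val → Bool) where
  toFun s := fun j => s.1 ⟨j.val, lt_trans j.2 i.2⟩
  invFun t := ⟨fun j => if hj : j.val < i.val then t ⟨j.val, hj⟩ else false, by
    funext j
    by_cases hj : j < i
    · rw [trunc_apply_of_lt hj]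
    · rw [trunc_apply_of_not_lt hj, dif_neg (by rwa [← Fin.lt_def])]⟩
  left_inv s := by
    apply Subtype.ext
    funext j
    by_cases hj : j.val < i.val
    · simp only [dif_pos hj]
    · simp only [dif_neg hj]
      have := congrFun s.2 j
      rw [trunc_apply_of_not_lt (by rwa [Fin.lt_def])] at this
      exact this
  right_inv t := by
    funext j
    simp only [dif_pos j.2]

lemma card_truncFixed (i : Fin k) : Fintype.card {s : X k // trunc i s = s} = 2 ^ i.val := by
  rw [Fintype.card_congr (lowEquiv i)]
  simp

/-- the permutation associated to a "portrait". -/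
def act (g : ∀ i : Fin k, {s : X k // trunc i s = s} → Bool) (x : X k) : X k :=
  fun i => xor (x i) (g i ⟨trunc i x, trunc_idem i x⟩)

lemma act_injective (g : ∀ i : Fin k, {s : X k // trunc i s = s} → Bool) :
    Function.Injective (act g) := by
  intro x y hxy
  funext j
  have key : ∀ n : ℕ, ∀ (hn : n < k), x ⟨n, hn⟩ = y ⟨n, hn⟩ := by
    intro n
    induction n using Nat.strong_induction_on with
    | _ n ih =>
      intro hn
      have htr : trunc ⟨n, hn⟩ x = trunc ⟨n, hn⟩ y := by
        apply trunc_eq_of_agree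
        intro j' hj'
        have := ih j'.val hj' j'.isLt
        simpa using this
      have this1 := congrFun hxy ⟨n, hn⟩
      simp only [act] at this1
      have harg : (⟨trunc ⟨n, hn⟩ x, trunc_idem _ x⟩ : {s : X k // trunc ⟨n, hn⟩ s = s})
          = ⟨trunc ⟨n, hn⟩ y, trunc_idem _ y⟩ := Subtype.ext htr
      rw [harg] at this1
      exact bool_xor_cancel_right _ _ _ this1
  have := key j.val j.isLt
  simpa using this

/-- the portrait permutation. -/
noncomputable def portPerm (g : ∀ i : Fin k, {s : X k // trunc i s = s} → Bool) : Perm (X k) :=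
  Equiv.ofBijective (act g) ((Finite.injective_iff_bijective).mp (act_injective g))

lemma portPerm_apply (g : ∀ i : Fin k, {s : X k // trunc i s = s} → Bool) (x : X k) :
    portPerm g x = act g x := rfl

lemma portPerm_mem (g : ∀ i : Fin k, {s : X k // trunc i s = s} → Bool) :
    portPerm g ∈ Tri k := by
  intro i x y hagree
  rw [portPerm_apply, portPerm_apply]
  simp only [act]
  rw [bool_xor_xor_left, bool_xor_xor_left]
  congr 1
  apply Subtype.ext
  exact trunc_eq_of_agree hagree

/-- `Tri k` is parametrized by portraits. -/
noncomputable def portEquiv :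
    (∀ i : Fin k, {s : X k // trunc i s = s} → Bool) ≃ (Tri k) where
  toFun g := ⟨portPerm g, portPerm_mem g⟩
  invFun π := fun i s => xor ((π : Perm (X k)) s.1 i) (s.1 i)
  left_inv g := by
    funext i s
    show xor (portPerm g s.1 i) (s.1 i) = g i s
    rw [portPerm_apply]
    simp only [act]
    have h1 : (⟨trunc i s.1, trunc_idem i s.1⟩ : {s : X k // trunc i s = s}) = s :=
      Subtype.ext s.2
    rw [h1]
    exact bool_xor_xor_left _ _
  right_inv π := by
    apply Subtype.ext
    apply Equiv.ext
    intro x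
    funext i
    have e := tri_pattern π.2 i x
    show portPerm _ x i = (π : Perm (X k)) x i
    rw [portPerm_apply]
    simp only [act]
    exact bool_xor_recover _ _ _ _ e

lemma sum_two_pow (n : ℕ) : ∑ i ∈ Finset.range n, 2 ^ i = 2 ^ n - 1 := by
  induction n with
  | zero => simp
  | succ n ih =>
    rw [Finset.sum_range_succ, ih]
    have : 1 ≤ 2 ^ n := Nat.one_le_two_pow
    omega

lemma card_tri : Nat.card (Tri k) = 2 ^ (2 ^ k - 1) := by
  rw [← Nat.card_congr (portEquiv (k := k)), Nat.card_pi]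
  have : ∀ i : Fin k, Nat.card ({s : X k // trunc i s = s} → Bool) = 2 ^ 2 ^ i.val := by
    intro i
    rw [Nat.card_eq_fintype_card, Fintype.card_fun, card_truncFixed]
    simp
  rw [Finset.prod_congr rfl (fun i _ => this i), Finset.prod_pow_eq_pow_sum]
  congr 1
  rw [Fin.sum_univ_eq_sum_range (fun n => 2 ^ n), sum_two_pow]

end Counting

section Sign

open Equiv

lemma sign_of_sq_one {α : Type*} [Fintype α] [DecidableEq α] :
    ∀ N (π : Perm α), π * π = 1 → π.support.card = N →
      ∃ n, N = 2 * n ∧ Perm.sign π = (-1) ^ n := by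
  intro N
  induction N using Nat.strong_induction_on with
  | _ N ih =>
    intro π hπ hcard
    by_cases h1 : π = 1
    · subst h1
      simp only [Perm.support_one, Finset.card_empty] at hcard
      exact ⟨0, by omega, by simp⟩
    · obtain ⟨a, ha⟩ : ∃ a, π a ≠ a := by
        by_contra hc
        push_neg at hc
        exact h1 (Equiv.ext hc)
      have hππ : ∀ x, π (π x) = x := by
        intro x
        have := congrArg (fun σ : Perm α => σ x) hπ
        simpa [Perm.mul_apply] using this
      set b := π a with hb
      have hba : π b = a := hππ a
      have hab : a ≠ b := fun hh => ha hh.symm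
      have hπne : ∀ x, x ≠ a → x ≠ b → π x ≠ a ∧ π x ≠ b := by
        intro x hxa hxb
        constructor
        · intro hxa'
          apply hxb
          rw [← hππ x, hxa', hb]
        · intro hxb'
          apply hxa
          rw [← hππ x, hxb', hba]
      set τ := Equiv.swap a b * π with hτ
      have hτa : τ a = a := by
        simp only [hτ, Perm.mul_apply, ← hb, swap_apply_right]
      have hτb : τ b = b := by
        simp only [hτ, Perm.mul_apply, hba, swap_apply_left]
      have hτx : ∀ x, x ≠ a → x ≠ b → τ x = π x := by
        intro x hxa hxb
        obtain ⟨h1', h2'⟩ := hπne x hxa hxb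
        simp only [hτ, Perm.mul_apply]
        exact swap_apply_of_ne_of_ne h1' h2'
      have hττ : τ * τ = 1 := by
        apply Equiv.ext
        intro x
        simp only [Perm.mul_apply, Perm.one_apply]
        by_cases hxa : x = a
        · subst hxa; rw [hτa, hτa]
        by_cases hxb : x = b
        · subst hxb; rw [hτb, hτb]
        obtain ⟨h1', h2'⟩ := hπne x hxa hxb
        rw [hτx x hxa hxb, hτx _ h1' h2', hππ]
      have hsupp : τ.support = π.support \ {a, b} := by
        ext x
        simp only [Perm.mem_support, Finset.mem_sdiff, Finset.mem_insert,
          Finset.mem_singleton]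
        by_cases hxa : x = a
        · subst hxa
          constructor
          · intro hcon; exact absurd hτa hcon
          · rintro ⟨-, hcon⟩; exact absurd (Or.inl rfl) hcon
        by_cases hxb : x = b
        · subst hxb
          constructor
          · intro hcon; exact absurd hτb hcon
          · rintro ⟨-, hcon⟩; exact absurd (Or.inr rfl) hcon
        · rw [hτx x hxa hxb]
          simp [hxa, hxb]
      have hsub : ({a, b} : Finset α) ⊆ π.support := by
        intro x hx
        simp only [Finset.mem_insert, Finset.mem_singleton] at hx
        rcases hx with rfl | rfl
        · exact Perm.mem_support.mpr ha
        · exact Perm.mem_support.mpr (by rw [hba]; exact fun hh => hab hh)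
      have hcard2 : τ.support.card = N - 2 := by
        rw [hsupp, Finset.card_sdiff_of_subset hsub, hcard, Finset.card_pair hab]
      have hN2 : 2 ≤ N := by
        rw [← hcard]
        calc 2 = ({a, b} : Finset α).card := (Finset.card_pair hab).symm
        _ ≤ _ := Finset.card_le_card hsub
      obtain ⟨n, hn, hs⟩ := ih (N - 2) (by omega) τ hττ hcard2
      refine ⟨n + 1, by omega, ?_⟩
      have hπeq : π = Equiv.swap a b * τ := by
        rw [hτ, ← mul_assoc, Equiv.swap_mul_self, one_mul]
      rw [hπeq, map_mul, Perm.sign_swap hab, hs, pow_succ, mul_comm]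

lemma Emap_fix_iff (i : Fin k) (h : X k → Bool) (x : X k) :
    Emap i h x = x ↔ h (trunc i x) = false := by
  constructor
  · intro he
    have := congrFun he i
    rw [Emap_apply, flipBit_apply_self] at this
    revert this
    generalize x i = a; generalize h (trunc i x) = c
    revert a c; decide
  · intro hf
    funext j
    by_cases hj : j = i
    · subst hj
      rw [Emap_apply, flipBit_apply_self, hf]
      simp
    · exact flipBit_apply_ne i h x hj

lemma Emap_support (i : Fin k) (h : X k → Bool) :
    (Emap i h).support = Finset.univ.filter (fun x => h (trunc i x) = true) := by
  ext x
  rw [Perm.mem_support, Finset.mem_filter]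
  simp only [Finset.mem_univ, true_and]
  rw [← Bool.not_eq_false]
  exact not_congr (Emap_fix_iff i h x)

lemma Emap_sign_card (i : Fin k) (h : X k → Bool) :
    ∃ n, Fintype.card {x : X k // h (trunc i x) = true} = 2 * n ∧
      Perm.sign (Emap i h) = (-1) ^ n := by
  obtain ⟨n, hn, hs⟩ := sign_of_sq_one (Emap i h).support.card (Emap i h) (Emap_sq i h) rfl
  refine ⟨n, ?_, hs⟩
  rw [Fintype.card_subtype, ← Emap_support, hn]

lemma Emap_even (i : Fin k) (h : X k → Bool) (hi : i.val < k - 1) :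
    Perm.sign (Emap i h) = 1 := by
  obtain ⟨n, hcard, hsign⟩ := Emap_sign_card i h
  rw [count_card] at hcard
  have h4 : (4 : ℕ) ∣ 2 * n := by
    rw [← hcard]
    apply Dvd.dvd.mul_left
    have : (2 : ℕ) ^ 2 ∣ 2 ^ (k - i.val) := pow_dvd_pow 2 (by omega)
    simpa using this
  have hev : Even n := by
    rcases h4 with ⟨c, hc⟩
    exact ⟨c, by omega⟩
  rw [hsign, hev.neg_one_pow]

lemma Emap_sign_top (i : Fin k) (h : X k → Bool) (hi : i.val = k - 1) (hk : 0 < k) :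
    Perm.sign (Emap i h) =
      (-1) ^ (Fintype.card {s : X k // trunc i s = s ∧ h s = true}) := by
  obtain ⟨n, hcard, hsign⟩ := Emap_sign_card i h
  rw [count_card] at hcard
  have hki : k - i.val = 1 := by omega
  rw [hki, pow_one] at hcard
  have : n = Fintype.card {s : X k // trunc i s = s ∧ h s = true} := by omega
  rw [hsign, this]

end Sign

section Generation

lemma bool_xor_abs : ∀ a b : Bool, xor a (xor a b) = b := by decide

/-- even involutions in the triangular group. -/
def EvenInv (k : ℕ) : Set (Perm (X k)) :=
  {π | π ∈ Tri k ∧ π ∈ alternatingGroup (X k) ∧ π * π = 1}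

lemma pairGen {i : Fin k} (hi : i.val = k - 1) {a b : X k}
    (ha : trunc i a = a) (hb : trunc i b = b) (hab : a ≠ b) :
    Emap i (fun s => decide (s = a ∨ s = b)) ∈ EvenInv k := by
  have hk : 0 < k := by
    rcases Nat.eq_zero_or_pos k with h | h
    · exact absurd i.isLt (by omega)
    · exact h
  refine ⟨Emap_mem_tri _ _, ?_, Emap_sq _ _⟩
  rw [Equiv.Perm.mem_alternatingGroup, Emap_sign_top i _ hi hk]
  have hcard : Fintype.card
      {s : X k // trunc i s = s ∧ (decide (s = a ∨ s = b)) = true} = 2 := by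
    rw [Fintype.card_subtype]
    have : Finset.univ.filter
        (fun s : X k => trunc i s = s ∧ (decide (s = a ∨ s = b)) = true) = {a, b} := by
      ext s
      simp only [Finset.mem_filter, Finset.mem_univ, true_and, decide_eq_true_eq,
        Finset.mem_insert, Finset.mem_singleton]
      constructor
      · rintro ⟨-, h⟩; exact h
      · rintro (rfl | rfl)
        · exact ⟨ha, Or.inl rfl⟩
        · exact ⟨hb, Or.inr rfl⟩
    rw [this, Finset.card_pair hab]
  rw [hcard]
  decide

lemma top_decomp (i : Fin k) (hi : i.val = k - 1) (hk : 0 < k) :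
    ∀ N, ∀ h : X k → Bool,
      (Finset.univ.filter (fun s : X k => trunc i s = s ∧ h s = true)).card = N →
      Even N → Emap i h ∈ Subgroup.closure (EvenInv k) := by
  intro N
  induction N using Nat.strong_induction_on with
  | _ N ih =>
    intro h hcard heven
    by_cases hN : N = 0
    · subst hN
      have hempty := Finset.card_eq_zero.mp hcard
      have : Emap i h = 1 := by
        apply Equiv.ext
        intro x
        rw [Perm.one_apply, Emap_fix_iff]
        by_contra hcon
        rw [Bool.not_eq_false] at hcon
        have : trunc i x ∈ Finset.univ.filter
            (fun s : X k => trunc i s = s ∧ h s = true) := by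
          simp only [Finset.mem_filter, Finset.mem_univ, true_and]
          exact ⟨trunc_idem i x, hcon⟩
        rw [hempty] at this
        exact Finset.notMem_empty _ this
      rw [this]
      exact one_mem _
    · have h2N : 1 < N := by
        rcases heven with ⟨c, hc⟩
        omega
      rw [← hcard] at h2N
      obtain ⟨a, haS, b, hbS, hab⟩ := Finset.one_lt_card.mp h2N
      simp only [Finset.mem_filter, Finset.mem_univ, true_and] at haS hbS
      set pairf : X k → Bool := fun s => decide (s = a ∨ s = b) with hpairf
      set h' : X k → Bool := fun s => if s = a ∨ s = b then false else h s with hh'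
      have hsplit : Emap i h = Emap i pairf * Emap i h' := by
        rw [Emap_mul]
        apply Emap_congr
        intro x
        by_cases hx : trunc i x = a ∨ trunc i x = b
        · have hp : pairf (trunc i x) = true := by
            rw [hpairf]; exact decide_eq_true hx
          have hh : h' (trunc i x) = false := by
            rw [hh']; simp only; rw [if_pos hx]
          have ht : h (trunc i x) = true := by
            rcases hx with hx | hx <;> rw [hx]
            · exact haS.2
            · exact hbS.2
          rw [hp, hh, ht]
          rfl
        · have hp : pairf (trunc i x) = false := by
            rw [hpairf]; exact decide_eq_false hx
          have hh : h' (trunc i x) = h (trunc i x) := by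
            rw [hh']; simp only; rw [if_neg hx]
          rw [hp, hh]
          generalize h (trunc i x) = c
          revert c; decide
      have hpmem : Emap i pairf ∈ Subgroup.closure (EvenInv k) :=
        Subgroup.subset_closure (pairGen hi haS.1 hbS.1 hab)
      have hcard' : (Finset.univ.filter
          (fun s : X k => trunc i s = s ∧ h' s = true)).card = N - 2 := by
        have hset : Finset.univ.filter (fun s : X k => trunc i s = s ∧ h' s = true)
            = (Finset.univ.filter (fun s : X k => trunc i s = s ∧ h s = true)) \ {a, b} := by
          ext s
          simp only [Finset.mem_filter, Finset.mem_univ, true_and, Finset.mem_sdiff,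
            Finset.mem_insert, Finset.mem_singleton]
          constructor
          · rintro ⟨ht, hs⟩
            by_cases hsab : s = a ∨ s = b
            · rw [hh'] at hs; simp only at hs; rw [if_pos hsab] at hs; exact absurd hs (by simp)
            · rw [hh'] at hs; simp only at hs; rw [if_neg hsab] at hs
              exact ⟨⟨ht, hs⟩, fun hc => hsab hc⟩
          · rintro ⟨⟨ht, hs⟩, hsab⟩
            refine ⟨ht, ?_⟩
            rw [hh']; simp only; rw [if_neg hsab]; exact hs
        rw [hset, Finset.card_sdiff_of_subset, hcard, Finset.card_pair hab]
        intro s hs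
        simp only [Finset.mem_insert, Finset.mem_singleton] at hs
        simp only [Finset.mem_filter, Finset.mem_univ, true_and]
        rcases hs with rfl | rfl
        · exact haS
        · exact hbS
      have hmem' : Emap i h' ∈ Subgroup.closure (EvenInv k) := by
        apply ih (N - 2) (by omega) h' hcard'
        rcases heven with ⟨c, hc⟩
        exact ⟨c - 1, by omega⟩
      rw [hsplit]
      exact mul_mem hpmem hmem'

lemma tri_inter_gen :
    ∀ m : ℕ, ∀ π : Perm (X k), π ∈ Tri k → π ∈ alternatingGroup (X k) →
      (∀ (x : X k) (j : Fin k), j.val < k - m → π x j = x j) →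
      π ∈ Subgroup.closure (EvenInv k) := by
  intro m
  induction m with
  | zero =>
    intro π _ _ hfix
    have : π = 1 := Equiv.ext fun x => funext fun j => hfix x j (by omega)
    rw [this]; exact one_mem _
  | succ m ih =>
    intro π hTri hA hfix
    by_cases hmk : m + 1 > k
    · exact ih π hTri hA (fun x j hj => hfix x j (by omega))
    · have hm : m + 1 ≤ k := by omega
      obtain ⟨i, hival⟩ : ∃ i : Fin k, i.val = k - (m + 1) := ⟨⟨k - (m + 1), by omega⟩, rfl⟩
      set h : X k → Bool := fun x => xor (π (trunc i x) i) (trunc i x i) with hdef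
      set σ := Emap i h with hσ
      have hσTri : σ ∈ Tri k := Emap_mem_tri i h
      have hσsq : σ * σ = 1 := Emap_sq i h
      have hfix' : ∀ (x : X k) (j : Fin k), j.val < k - m → (σ * π) x j = x j := by
        intro x j hj
        rw [Perm.mul_apply]
        by_cases hji : j = i
        · rw [hji]
          rw [hσ, Emap_apply, flipBit_apply_self]
          have htr : trunc i (π x) = trunc i x := by
            apply trunc_eq_of_agree
            intro j' hj'
            apply hfix x j'
            have hlt : j'.val < i.val := hj'
            omega
          rw [htr]
          have hpat := tri_pattern hTri i x
          have hval : h (trunc i x) = xor (π x i) (x i) := by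
            rw [hdef]; simp only; rw [trunc_idem]; exact hpat.symm
          rw [hval, bool_xor_abs]
        · have hjlt : j.val < i.val := by
            have hne : j.val ≠ i.val := fun hc => hji (Fin.ext hc)
            omega
          rw [hσ, Emap_apply, flipBit_apply_ne _ _ _ hji]
          exact hfix x j (by omega)
      have hσA : σ ∈ alternatingGroup (X k) := by
        by_cases hik : i.val < k - 1
        · rw [Equiv.Perm.mem_alternatingGroup, hσ]
          exact Emap_even i h hik
        · have hm0 : m = 0 := by omega
          subst hm0
          have hone : σ * π = 1 :=
            Equiv.ext fun x => funext fun j => hfix' x j (by omega)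
          have : σ = π⁻¹ := eq_inv_of_mul_eq_one_left hone
          rw [this]
          exact inv_mem hA
      have hπ' : σ * π ∈ Subgroup.closure (EvenInv k) :=
        ih (σ * π) (mul_mem hσTri hTri) (mul_mem hσA hA) hfix'
      have hσmem : σ ∈ Subgroup.closure (EvenInv k) := by
        by_cases hik : i.val < k - 1
        · exact Subgroup.subset_closure ⟨hσTri, by
            rw [Equiv.Perm.mem_alternatingGroup, hσ]; exact Emap_even i h hik, hσsq⟩
        · have hival' : i.val = k - 1 := by omega
          have hk0 : 0 < k := by omega
          refine top_decomp i hival' hk0 _ h rfl ?_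
          rw [← Fintype.card_subtype]
          have hsgn := Emap_sign_top i h hival' hk0
          rw [← hσ] at hsgn
          have hσ1 : Perm.sign σ = 1 := Equiv.Perm.mem_alternatingGroup.mp hσA
          rw [hσ1] at hsgn
          by_contra hodd
          rw [Nat.not_even_iff_odd] at hodd
          rw [hodd.neg_one_pow] at hsgn
          exact absurd hsgn (by decide)
      have : π = σ * (σ * π) := by
        rw [← mul_assoc, hσsq, one_mul]
      rw [this]
      exact mul_mem hσmem hπ'

lemma closure_evenInv :
    Subgroup.closure (EvenInv k) = Tri k ⊓ alternatingGroup (X k) := by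
  apply le_antisymm
  · rw [Subgroup.closure_le]
    rintro π ⟨h1, h2, -⟩
    exact ⟨h1, h2⟩
  · rintro π ⟨h1, h2⟩
    exact tri_inter_gen k π h1 h2 (fun x j hj => absurd hj (by omega))

end Generation

section SylowConstruction

instance factPrimeTwo : Fact (Nat.Prime 2) := ⟨Nat.prime_two⟩

lemma factorization_two_pow_factorial (k : ℕ) :
    (Nat.factorial (2 ^ k)).factorization 2 = 2 ^ k - 1 := by
  induction k with
  | zero => simp
  | succ n ih =>
    have h2 : (2 : ℕ) ^ (n + 1) = 2 * 2 ^ n := by ring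
    rw [h2, Nat.factorization_def _ Nat.prime_two, padicValNat_factorial_mul,
      ← Nat.factorization_def _ Nat.prime_two, ih]
    have : 1 ≤ 2 ^ n := Nat.one_le_two_pow
    omega

lemma card_perm_X (k : ℕ) : Nat.card (Perm (X k)) = Nat.factorial (2 ^ k) := by
  rw [Nat.card_eq_fintype_card, Fintype.card_perm]
  congr 1
  rw [Fintype.card_fun]
  simp

lemma nontrivial_X {k : ℕ} (hk : 1 ≤ k) : Nontrivial (X k) := by
  refine ⟨⟨fun _ => false, fun _ => true, fun hcon => ?_⟩⟩
  have := congrFun hcon ⟨0, by omega⟩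
  simp at this

lemma card_alt {k : ℕ} (hk : 1 ≤ k) :
    (Nat.card (alternatingGroup (X k))).factorization 2 = 2 ^ k - 2 := by
  haveI := nontrivial_X hk
  have h2 := two_mul_card_alternatingGroup (α := X k)
  have hA0 : Fintype.card (alternatingGroup (X k)) ≠ 0 := Fintype.card_ne_zero
  have hfac := congrArg (fun n => n.factorization 2) h2
  rw [Nat.factorization_mul two_ne_zero hA0, Finsupp.add_apply,
    Nat.Prime.factorization_self Nat.prime_two] at hfac
  have hperm : (Fintype.card (Perm (X k))).factorization 2 = 2 ^ k - 1 := by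
    rw [← Nat.card_eq_fintype_card, card_perm_X, factorization_two_pow_factorial]
  rw [hperm] at hfac
  rw [Nat.card_eq_fintype_card]
  have h2k : 2 ≤ 2 ^ k := by
    calc 2 = 2 ^ 1 := (pow_one 2).symm
    _ ≤ 2 ^ k := Nat.pow_le_pow_right (by norm_num) hk
  omega

def Q0sub (k : ℕ) : Subgroup (alternatingGroup (X k)) :=
  (Tri k).subgroupOf (alternatingGroup (X k))

lemma card_subgroupOf' {G : Type*} [Group G] (H K : Subgroup G) :
    Nat.card (H.subgroupOf K) = Nat.card ↥(H ⊓ K) := by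
  rw [← Subgroup.inf_subgroupOf_right]
  exact Nat.card_congr (Subgroup.subgroupOfEquivOfLe inf_le_right).toEquiv

lemma sign_single {k : ℕ} (hk : 1 ≤ k) :
    Perm.sign (Emap (⟨k - 1, by omega⟩ : Fin k) (fun s => decide (s = fun _ => false))) = -1 := by
  set i : Fin k := ⟨k - 1, by omega⟩ with hidef
  set a0 : X k := fun _ => false with ha0
  have ha0t : trunc i a0 = a0 := by
    funext j
    by_cases hj : j < i
    · rw [trunc_apply_of_lt hj]
    · rw [trunc_apply_of_not_lt hj]
  rw [Emap_sign_top i _ rfl (by omega)]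
  have hcard : Fintype.card {s : X k // trunc i s = s ∧ (decide (s = a0)) = true} = 1 := by
    rw [Fintype.card_subtype]
    have : Finset.univ.filter
        (fun s : X k => trunc i s = s ∧ (decide (s = a0)) = true) = {a0} := by
      ext s
      simp only [Finset.mem_filter, Finset.mem_univ, true_and, decide_eq_true_eq,
        Finset.mem_singleton]
      constructor
      · rintro ⟨-, h⟩; exact h
      · rintro rfl; exact ⟨ha0t, rfl⟩
    rw [this, Finset.card_singleton]
  rw [hcard, pow_one]

lemma card_Q0 {k : ℕ} (hk : 1 ≤ k) : Nat.card (Q0sub k) = 2 ^ (2 ^ k - 2) := by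
  set A := alternatingGroup (X k)
  let f : (Tri k) →* ℤˣ := Equiv.Perm.sign.comp (Tri k).subtype
  have hfsurj : Function.Surjective f := by
    intro u
    rcases Int.units_eq_one_or u with rfl | rfl
    · exact ⟨1, map_one f⟩
    · refine ⟨⟨Emap (⟨k - 1, by omega⟩ : Fin k) (fun s => decide (s = fun _ => false)),
        Emap_mem_tri _ _⟩, ?_⟩
      exact sign_single hk
  have hker : f.ker = A.subgroupOf (Tri k) := by
    ext g
    simp only [MonoidHom.mem_ker, Subgroup.mem_subgroupOf, f, MonoidHom.comp_apply,
      Subgroup.coe_subtype]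
    exact (Equiv.Perm.mem_alternatingGroup (f := (g : Perm (X k)))).symm
  have hq := Subgroup.card_eq_card_quotient_mul_card_subgroup f.ker
  have hquot : Nat.card ((Tri k) ⧸ f.ker) = 2 := by
    rw [Nat.card_congr (QuotientGroup.quotientKerEquivOfSurjective f hfsurj).toEquiv,
      Nat.card_eq_fintype_card, Fintype.card_units_int]
  have hkerQ : Nat.card f.ker = Nat.card (Q0sub k) := by
    rw [hker]
    show Nat.card (A.subgroupOf (Tri k)) = Nat.card ((Tri k).subgroupOf A)
    rw [card_subgroupOf', card_subgroupOf', inf_comm]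
  rw [card_tri, hquot, hkerQ] at hq
  have hpow : (2 : ℕ) ^ (2 ^ k - 1) = 2 * 2 ^ (2 ^ k - 2) := by
    rw [← pow_succ']
    congr 1
    have : 2 ≤ 2 ^ k := by
      calc 2 = 2 ^ 1 := (pow_one 2).symm
      _ ≤ 2 ^ k := Nat.pow_le_pow_right (by norm_num) hk
    omega
  rw [hpow] at hq
  exact (Nat.eq_of_mul_eq_mul_left (by norm_num) hq).symm

noncomputable def sylowQ0 {k : ℕ} (hk : 1 ≤ k) : Sylow 2 (alternatingGroup (X k)) :=
  Sylow.ofCard (Q0sub k) (by rw [card_Q0 hk, card_alt hk])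

lemma Q0_amb_gen (k : ℕ) :
    Subgroup.closure {g : ↥(alternatingGroup (X k)) | g ∈ Q0sub k ∧ g * g = 1} = Q0sub k := by
  apply Subgroup.map_injective (alternatingGroup (X k)).subtype_injective
  rw [MonoidHom.map_closure, Q0sub, Subgroup.subgroupOf_map_subtype]
  have hset : (alternatingGroup (X k)).subtype ''
      {g : ↥(alternatingGroup (X k)) | g ∈ (Tri k).subgroupOf (alternatingGroup (X k))
        ∧ g * g = 1} = EvenInv k := by
    ext π
    constructor
    · rintro ⟨g, ⟨hmem, hsq⟩, rfl⟩
      refine ⟨Subgroup.mem_subgroupOf.mp hmem, g.2, ?_⟩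
      have := congrArg (Subtype.val) hsq
      simpa using this
    · rintro ⟨hTri, hA, hsq⟩
      refine ⟨⟨π, hA⟩, ⟨Subgroup.mem_subgroupOf.mpr hTri, ?_⟩, rfl⟩
      apply Subtype.ext
      simpa using hsq
  rw [hset, closure_evenInv]

end SylowConstruction

section Transfer

lemma invgen_transfer {G H : Type*} [Group G] [Group H] (e : G ≃* H)
    (h : Subgroup.closure {g : G | g * g = 1} = ⊤) :
    Subgroup.closure {g : H | g * g = 1} = ⊤ := by
  apply le_antisymm le_top
  calc (⊤ : Subgroup H) = Subgroup.map e.toMonoidHom ⊤ :=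
        (Subgroup.map_top_of_surjective _ e.surjective).symm
    _ = Subgroup.map e.toMonoidHom (Subgroup.closure {g : G | g * g = 1}) := by rw [h]
    _ = Subgroup.closure (e '' {g : G | g * g = 1}) := MonoidHom.map_closure _ _
    _ ≤ Subgroup.closure {g : H | g * g = 1} := by
        apply Subgroup.closure_mono
        rintro _ ⟨g, hg, rfl⟩
        show e g * e g = 1
        rw [← map_mul, hg, map_one]

lemma closure_inv_top_of_ambient {G : Type*} [Group G] (K : Subgroup G)
    (hK : Subgroup.closure {x : G | x ∈ K ∧ x * x = 1} = K) :
    Subgroup.closure {g : ↥K | g * g = 1} = ⊤ := by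
  set S := {x : G | x ∈ K ∧ x * x = 1} with hS
  have h1 := Subgroup.closure_closure_coe_preimage (k := S)
  let e : ↥(Subgroup.closure S) ≃* ↥K := MulEquiv.subgroupCongr hK
  apply le_antisymm le_top
  calc (⊤ : Subgroup ↥K) = Subgroup.map e.toMonoidHom ⊤ :=
        (Subgroup.map_top_of_surjective _ e.surjective).symm
    _ = Subgroup.map e.toMonoidHom (Subgroup.closure (((↑) : Subgroup.closure S → G) ⁻¹' S)) := by
        rw [h1]
    _ = Subgroup.closure (e '' (((↑) : Subgroup.closure S → G) ⁻¹' S)) :=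
        MonoidHom.map_closure _ _
    _ ≤ Subgroup.closure {g : ↥K | g * g = 1} := by
        apply Subgroup.closure_mono
        rintro _ ⟨g, hg, rfl⟩
        show e g * e g = 1
        rw [← map_mul]
        have hgg : g * g = 1 := by
          apply Subtype.ext
          exact hg.2
        rw [hgg, map_one]

/-- `Equiv.permCongr` as a `MulEquiv`. -/
def permMulEquiv {α β : Type*} (e : α ≃ β) : Perm α ≃* Perm β where
  toEquiv := e.permCongr
  map_mul' f g := by
    ext x
    simp [Equiv.permCongr_apply, Perm.mul_apply]

lemma permMulEquiv_apply {α β : Type*} (e : α ≃ β) (f : Perm α) :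
    permMulEquiv e f = e.permCongr f := rfl

end Transfer

end AltSyl

open AltSyl in
theorem frattini_sylow_alt_eq_commutator' (k : ℕ) (hk : 2 ≤ k)
    (P : Sylow 2 (alternatingGroup (Fin (2 ^ k)))) :
    Subgroup.closure {g : ↥P | g * g = 1} = ⊤ := by
  classical
  have hk1 : 1 ≤ k := by omega
  haveI : Fact (Nat.Prime 2) := ⟨Nat.prime_two⟩
  let e0 : Fin (2 ^ k) ≃ AltSyl.X k :=
    (finFunctionFinEquiv (m := 2) (n := k)).symm.trans
      (Equiv.arrowCongr (Equiv.refl (Fin k)) finTwoEquiv)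
  let eP := AltSyl.permMulEquiv e0
  have halt : (alternatingGroup (Fin (2 ^ k))).map eP.toMonoidHom
      = alternatingGroup (AltSyl.X k) := by
    ext π
    simp only [Subgroup.mem_map]
    constructor
    · rintro ⟨σ, hσ, rfl⟩
      rw [Equiv.Perm.mem_alternatingGroup]
      rw [show eP.toMonoidHom σ = e0.permCongr σ from rfl, Equiv.Perm.sign_permCongr]
      exact Equiv.Perm.mem_alternatingGroup.mp hσ
    · intro hπ
      refine ⟨eP.symm π, ?_, eP.apply_symm_apply π⟩
      rw [Equiv.Perm.mem_alternatingGroup]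
      have h1 : Equiv.Perm.sign (e0.permCongr (eP.symm π)) = Equiv.Perm.sign (eP.symm π) :=
        Equiv.Perm.sign_permCongr e0 _
      have h2 : e0.permCongr (eP.symm π) = π := eP.apply_symm_apply π
      rw [h2] at h1
      rw [← h1]
      exact Equiv.Perm.mem_alternatingGroup.mp hπ
  let eA : ↥(alternatingGroup (Fin (2 ^ k))) ≃* ↥(alternatingGroup (AltSyl.X k)) :=
    (eP.subgroupMap (alternatingGroup (Fin (2 ^ k)))).trans (MulEquiv.subgroupCongr halt)
  let Q1sub : Subgroup ↥(alternatingGroup (AltSyl.X k)) :=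
    Subgroup.map eA.toMonoidHom (P : Subgroup _)
  have ePQ : ↥(P : Subgroup (alternatingGroup (Fin (2 ^ k)))) ≃* ↥Q1sub :=
    Subgroup.equivMapOfInjective (P : Subgroup (alternatingGroup (Fin (2 ^ k))))
      eA.toMonoidHom eA.injective
  have hcardQ1 : Nat.card Q1sub
      = 2 ^ ((Nat.card ↥(alternatingGroup (AltSyl.X k))).factorization 2) := by
    calc Nat.card Q1sub
        = Nat.card ↥(P : Subgroup (alternatingGroup (Fin (2 ^ k)))) :=
          (Nat.card_congr ePQ.toEquiv).symm
      _ = 2 ^ ((Nat.card ↥(alternatingGroup (Fin (2 ^ k)))).factorization 2) :=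
          P.card_eq_multiplicity
      _ = 2 ^ ((Nat.card ↥(alternatingGroup (AltSyl.X k))).factorization 2) := by
          rw [Nat.card_congr eA.toEquiv]
  let Q1 : Sylow 2 ↥(alternatingGroup (AltSyl.X k)) := Sylow.ofCard Q1sub hcardQ1
  let Q0 : Sylow 2 ↥(alternatingGroup (AltSyl.X k)) := AltSyl.sylowQ0 hk1
  have hQ0top : Subgroup.closure {g : ↥(AltSyl.Q0sub k) | g * g = 1} = ⊤ :=
    AltSyl.closure_inv_top_of_ambient _ (AltSyl.Q0_amb_gen k)
  have hQ1top : Subgroup.closure {g : ↥Q1sub | g * g = 1} = ⊤ :=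
    AltSyl.invgen_transfer (Sylow.equiv Q0 Q1) hQ0top
  exact AltSyl.invgen_transfer ePQ.symm hQ1top


/-- for `k ≥ 2`, the Frattini subgroup of a Sylow 2-subgroup of the
alternating group `A_{2^k}` equals its commutator subgroup. -/
theorem frattini_sylow_alt_eq_commutator (k : ℕ) (hk : 2 ≤ k)
    (P : Sylow 2 (alternatingGroup (Fin (2 ^ k)))) :
    frattini ↥P = commutator ↥P := by
  exact frattini_eq_commutator_of_invgen P.isPGroup'
    (frattini_sylow_alt_eq_commutator' k hk P)
end

section
/- The order of a Sylow 2-subgroup of A_{2^k} is 2^{2^k - 2}, and the order of its commutator subgroup is 2^{2^k - k - 2}, for k ≥ 2. -/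
open Equiv SemidirectProduct
open scoped commutatorElement

/-- hom from `ℤˣ` determined by an involution. -/
def invol {M : Type*} [Monoid M] (m : M) (h : m * m = 1) : ℤˣ →* M where
  toFun x := if x = 1 then 1 else m
  map_one' := if_pos rfl
  map_mul' x y := by
    rcases Int.units_eq_one_or x with hx | hx <;> rcases Int.units_eq_one_or y with hy | hy <;>
      subst hx <;> subst hy <;> simp [h]

@[simp] lemma invol_one {M : Type*} [Monoid M] (m : M) (h) : invol m h 1 = 1 := rfl

@[simp] lemma invol_neg_one {M : Type*} [Monoid M] (m : M) (h) : invol m h (-1) = m := by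
  simp [invol]

variable {G : Type*} [Group G]

def swapAut (G : Type*) [Group G] : MulAut (G × G) := (MulEquiv.prodComm : G × G ≃* G × G)

lemma swapAut_sq : swapAut G * swapAut G = 1 := by
  ext x <;> simp [swapAut, MulAut.mul_apply]

def wphi (G : Type*) [Group G] : ℤˣ →* MulAut (G × G) := invol (swapAut G) swapAut_sq

/-- wreath-type product `(G × G) ⋊ C₂`. -/
abbrev WD (G : Type*) [Group G] := (G × G) ⋊[wphi G] ℤˣ

@[simp] lemma wphi_one (p : G × G) : wphi G 1 p = p := rfl

@[simp] lemma wphi_neg_one (p : G × G) : wphi G (-1) p = (p.2, p.1) := by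
  simp [wphi]
  rfl

/-- the hom `WD G →* A` given by multiplying a hom to a commutative group over both coordinates. -/
def sumHom {A : Type*} [CommGroup A] (f : G →* A) : WD G →* A where
  toFun x := f x.left.1 * f x.left.2
  map_one' := by simp
  map_mul' x y := by
    rcases Int.units_eq_one_or x.right with h | h <;>
      simp only [mul_left, h, wphi_one, wphi_neg_one, Prod.fst_mul, Prod.snd_mul, map_mul] <;>
      · simp [mul_assoc, mul_comm, mul_left_comm]

lemma of_eq_one_iff {x : G} : Abelianization.of x = 1 ↔ x ∈ commutator G :=
  QuotientGroup.eq_one_iff x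

/-- the subgroup `{((a,b),1) : a*b ∈ [G,G]}` of `WD G`. -/
def DA (G : Type*) [Group G] : Subgroup (WD G) :=
  (rightHom : WD G →* ℤˣ).ker ⊓ (sumHom Abelianization.of).ker

lemma mem_DA {x : WD G} :
    x ∈ DA G ↔ x.right = 1 ∧ x.left.1 * x.left.2 ∈ commutator G := by
  rw [DA, Subgroup.mem_inf, MonoidHom.mem_ker, MonoidHom.mem_ker, ← of_eq_one_iff]
  simp [sumHom, rightHom]

/-- embedding `c ↦ ((1,c),1)`. -/
def inl2 (G : Type*) [Group G] : G →* WD G := inl.comp (MonoidHom.inr G G)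

@[simp] lemma inl2_left (c : G) : (inl2 G c).left = (1, c) := rfl
@[simp] lemma inl2_right (c : G) : (inl2 G c).right = 1 := rfl

/-- the top swap element. -/
def tt (G : Type*) [Group G] : WD G := ⟨(1, 1), -1⟩

@[simp] lemma tt_left : (tt G).left = (1, 1) := rfl
@[simp] lemma tt_right : (tt G).right = -1 := rfl

lemma eq_inl_of_right_eq_one {x : WD G} (h : x.right = 1) : x = inl x.left := by
  ext <;> simp [h]

lemma inl_comm_eq : (inl (a, a⁻¹) : WD G) = ⁅(inl (a, 1) : WD G), tt G⁆ := by
  have : ((-1 : ℤˣ))⁻¹ = -1 := rfl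
  ext <;> simp [commutatorElement_def, mul_left, mul_right, inv_left, inv_right, this]

lemma inl2_mem_commutator {c : G} (hc : c ∈ commutator G) :
    inl2 G c ∈ commutator (WD G) := by
  have h : commutator G ≤ Subgroup.comap (inl2 G) (commutator (WD G)) := by
    rw [commutator_def G, Subgroup.commutator_le]
    intro g _ h _
    rw [Subgroup.mem_comap, map_commutatorElement, commutator_def]
    exact Subgroup.commutator_mem_commutator (Subgroup.mem_top _) (Subgroup.mem_top _)
  exact h hc

/-- Lemma A: the commutator subgroup of `WD G`. -/
theorem commutator_WD (G : Type*) [Group G] : commutator (WD G) = DA G := by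
  apply le_antisymm
  · rw [commutator_def, Subgroup.commutator_le]
    intro g _ h _
    refine Subgroup.mem_inf.mpr ⟨?_, ?_⟩ <;>
      refine MonoidHom.mem_ker.mpr ?_ <;>
      rw [map_commutatorElement] <;>
      exact commutatorElement_eq_one_iff_mul_comm.mpr (mul_comm _ _)
  · intro x hx
    rw [mem_DA] at hx
    obtain ⟨hr, hab⟩ := hx
    have hx1 : x = inl (x.left.1, x.left.1⁻¹) * inl2 G (x.left.1 * x.left.2) := by
      rw [eq_inl_of_right_eq_one hr]
      ext <;> simp [mul_left, mul_right]
    rw [hx1]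
    refine mul_mem ?_ (inl2_mem_commutator hab)
    rw [inl_comm_eq, commutator_def]
    exact Subgroup.commutator_mem_commutator (Subgroup.mem_top _) (Subgroup.mem_top _)

section LemmaB

variable (s : G →* ℤˣ)

/-- For a character `s : G →* ℤˣ`, the whole commutator subgroup is
generated by commutators with one entry in `ker s`. -/
lemma commutator_le_comm_ker : commutator G ≤ ⁅(⊤ : Subgroup G), s.ker⁆ := by
  haveI : (⁅(⊤ : Subgroup G), s.ker⁆).Normal := Subgroup.commutator_normal ⊤ s.ker
  rw [commutator_def, Subgroup.commutator_le]
  intro g _ h _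
  rcases Int.units_eq_one_or (s h) with hh | hh
  · exact Subgroup.commutator_mem_commutator (Subgroup.mem_top _) hh
  · rcases Int.units_eq_one_or (s g) with hg | hg
    · have : ⁅h, g⁆ ∈ ⁅(⊤ : Subgroup G), s.ker⁆ :=
        Subgroup.commutator_mem_commutator (Subgroup.mem_top _) hg
      rw [← commutatorElement_inv]
      exact inv_mem this
    · have hgh : g * h ∈ s.ker := by
        rw [MonoidHom.mem_ker, map_mul, hg, hh]; decide
      have key : ⁅g, h⁆ = g⁻¹ * ⁅g, g * h⁆ * g := by group
      rw [key]
      exact this.conj_mem' _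
        (Subgroup.commutator_mem_commutator (Subgroup.mem_top _) hgh) g

/-- the subgroup `{((a,b),1) : a*b ∈ [G,G], s a = 1}` of `WD G`. -/
def DB : Subgroup (WD G) where
  carrier := {x | x ∈ DA G ∧ x.left.1 ∈ s.ker}
  one_mem' := ⟨one_mem _, by simp [MonoidHom.mem_ker]⟩
  mul_mem' := by
    rintro x y ⟨hx, hx1⟩ ⟨hy, hy1⟩
    refine ⟨mul_mem hx hy, ?_⟩
    have hr : x.right = 1 := (mem_DA.mp hx).1
    simp only [mul_left, hr, wphi_one, Prod.fst_mul]
    exact mul_mem hx1 hy1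
  inv_mem' := by
    rintro x ⟨hx, hx1⟩
    refine ⟨inv_mem hx, ?_⟩
    have hr : x.right = 1 := (mem_DA.mp hx).1
    simp only [inv_left, hr, inv_one, wphi_one, Prod.fst_inv]
    exact inv_mem hx1

lemma mem_DB {x : WD G} : x ∈ DB s ↔ x ∈ DA G ∧ x.left.1 ∈ s.ker := Iff.rfl

/-- the kernel of the sum character on `WD G`; for `s` the sign character
this is (isomorphic to) the Sylow 2-subgroup of the alternating group. -/
def KK : Subgroup (WD G) := (sumHom s).ker

lemma mem_KK {x : WD G} : x ∈ KK s ↔ s x.left.1 * s x.left.2 = 1 := Iff.rfl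

lemma snd_eq_fst_of_mem_KK {x : WD G} (hx : x ∈ KK s) : s x.left.2 = s x.left.1 := by
  rw [mem_KK] at hx
  rcases Int.units_eq_one_or (s x.left.1) with h | h <;>
    rcases Int.units_eq_one_or (s x.left.2) with h' | h' <;> rw [h, h'] at hx ⊢ <;> simp_all

/-- the first-coordinate character on `KK s`. -/
def chi : (KK s) →* ℤˣ where
  toFun u := s u.1.left.1
  map_one' := by simp [KK]
  map_mul' u v := by
    rcases Int.units_eq_one_or (u.1.right) with h | h <;>
      simp only [Subgroup.coe_mul, mul_left, h, wphi_one, wphi_neg_one, Prod.fst_mul, map_mul]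
    rw [snd_eq_fst_of_mem_KK s v.2]

/-- Lemma B: the commutator subgroup of `KK s`. -/
theorem commutator_KK : ⁅KK s, KK s⁆ = DB s := by
  apply le_antisymm
  · rw [Subgroup.commutator_le]
    intro g hg h hh
    refine ⟨?_, ?_⟩
    · rw [← commutator_WD, commutator_def]
      exact Subgroup.commutator_mem_commutator (Subgroup.mem_top _) (Subgroup.mem_top _)
    · have : (⁅g, h⁆ : WD G) = ((⁅(⟨g, hg⟩ : KK s), (⟨h, hh⟩ : KK s)⁆ : KK s) : WD G) := by
        simp [commutatorElement_def]
      rw [MonoidHom.mem_ker]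
      have hchi : chi s ⁅(⟨g, hg⟩ : KK s), (⟨h, hh⟩ : KK s)⁆ = 1 := by
        rw [map_commutatorElement]
        exact commutatorElement_eq_one_iff_mul_comm.mpr (mul_comm _ _)
      calc s (⁅g, h⁆ : WD G).left.1
          = chi s ⁅(⟨g, hg⟩ : KK s), (⟨h, hh⟩ : KK s)⁆ := by rw [this]; rfl
        _ = 1 := hchi
  · rintro x ⟨hx, hx1⟩
    rw [mem_DA] at hx
    obtain ⟨hr, hab⟩ := hx
    have hx2 : x = inl (x.left.1, x.left.1⁻¹) * inl2 G (x.left.1 * x.left.2) := by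
      rw [eq_inl_of_right_eq_one hr]
      ext <;> simp [mul_left, mul_right]
    have h1 : (inl (x.left.1, x.left.1⁻¹) : WD G) ∈ ⁅KK s, KK s⁆ := by
      rw [inl_comm_eq]
      refine Subgroup.commutator_mem_commutator ?_ ?_
      · rw [mem_KK]
        simp [MonoidHom.mem_ker.mp hx1]
      · rw [mem_KK]; simp
    have h2 : ∀ c ∈ commutator G, inl2 G c ∈ ⁅KK s, KK s⁆ := by
      intro c hc
      have hle : ⁅(⊤ : Subgroup G), s.ker⁆ ≤ Subgroup.comap (inl2 G) ⁅KK s, KK s⁆ := by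
        rw [Subgroup.commutator_le]
        intro g _ u hu
        rw [Subgroup.mem_comap]
        have e1 : inl2 G ⁅g, u⁆ = ⁅(inl (g, g) : WD G), inl2 G u⁆ := by
          ext <;> simp [commutatorElement_def, mul_left, mul_right, inv_left, inv_right]
        rw [e1]
        refine Subgroup.commutator_mem_commutator ?_ ?_
        · rw [mem_KK]
          simp [Int.units_mul_self]
        · rw [mem_KK]
          simp [MonoidHom.mem_ker.mp hu]
      exact hle (commutator_le_comm_ker s hc)
    rw [hx2]
    exact mul_mem h1 (h2 _ hab)

end LemmaB

section Cards

/-- a semidirect product is (as a type) just a product. -/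
def sdEquivProd {N H : Type*} [Group N] [Group H] {φ : H →* MulAut N} :
    (N ⋊[φ] H) ≃ N × H where
  toFun x := (x.left, x.right)
  invFun p := ⟨p.1, p.2⟩
  left_inv x := by ext <;> rfl
  right_inv p := rfl

lemma card_WD (G : Type*) [Group G] :
    Nat.card (WD G) = Nat.card G * Nat.card G * 2 := by
  rw [Nat.card_congr (sdEquivProd), Nat.card_prod, Nat.card_prod,
    Nat.card_eq_fintype_card (α := ℤˣ), Fintype.card_units_int]

/-- `DA G` is in bijection with `G × commutator G`. -/
def DAEquiv (G : Type*) [Group G] : (DA G) ≃ G × (commutator G) where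
  toFun x := (x.1.left.1, ⟨x.1.left.1 * x.1.left.2, (mem_DA.mp x.2).2⟩)
  invFun p := ⟨⟨(p.1, p.1⁻¹ * p.2.1), 1⟩, mem_DA.mpr ⟨rfl, by simpa using p.2.2⟩⟩
  left_inv x := by
    have hr := (mem_DA.mp x.2).1
    ext <;> simp [← hr]
  right_inv p := by ext <;> simp

lemma card_DA (G : Type*) [Group G] :
    Nat.card (DA G) = Nat.card G * Nat.card (commutator G) := by
  rw [Nat.card_congr (DAEquiv G), Nat.card_prod]

/-- `DB s` is in bijection with `ker s × commutator G`. -/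
def DBEquiv (s : G →* ℤˣ) : (DB s) ≃ s.ker × (commutator G) where
  toFun x := (⟨x.1.left.1, x.2.2⟩, ⟨x.1.left.1 * x.1.left.2, (mem_DA.mp x.2.1).2⟩)
  invFun p := ⟨⟨(p.1.1, p.1.1⁻¹ * p.2.1), 1⟩,
    ⟨mem_DA.mpr ⟨rfl, by simpa using p.2.2⟩, p.1.2⟩⟩
  left_inv x := by
    have hr := (mem_DA.mp x.2.1).1
    ext <;> simp [← hr]
  right_inv p := by ext <;> simp

lemma card_DB (s : G →* ℤˣ) :
    Nat.card (DB s) = Nat.card s.ker * Nat.card (commutator G) := by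
  rw [Nat.card_congr (DBEquiv s), Nat.card_prod]

lemma card_ker_of_surjective {G : Type*} [Group G] [Finite G] (s : G →* ℤˣ)
    (hs : Function.Surjective s) : Nat.card s.ker * 2 = Nat.card G := by
  have h1 : s.ker.index = 2 := by
    rw [Subgroup.index]
    rw [Nat.card_congr (QuotientGroup.quotientKerEquivOfSurjective s hs).toEquiv]
    rw [Nat.card_eq_fintype_card (α := ℤˣ), Fintype.card_units_int]
  rw [← h1, Subgroup.card_mul_index]

lemma card_commutator_congr {G H : Type*} [Group G] [Group H] (e : G ≃* H) :
    Nat.card (commutator G) = Nat.card (commutator H) := by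
  have h : commutator H = Subgroup.map e.toMonoidHom (commutator G) := by
    rw [commutator_def, commutator_def, Subgroup.map_commutator]
    congr 1 <;> exact (Subgroup.map_top_of_surjective _ e.surjective).symm
  rw [h]
  exact Nat.card_congr (Subgroup.equivMapOfInjective _ _ e.injective).toEquiv

lemma card_commutator_subgroup {G : Type*} [Group G] (H : Subgroup G) :
    Nat.card (commutator H) = Nat.card (⁅H, H⁆ : Subgroup G) := by
  have ht : Subgroup.map H.subtype ⊤ = H :=
    (MonoidHom.range_eq_map H.subtype).symm.trans (Subgroup.range_subtype H)
  have h : Subgroup.map H.subtype (commutator ↥H) = ⁅H, H⁆ := by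
    rw [commutator_def, Subgroup.map_commutator, ht]
  rw [← h]
  exact Nat.card_congr (Subgroup.equivMapOfInjective _ _ H.subtype_injective).toEquiv

end Cards

section Emb

open Equiv.Perm

variable {β : Type*}

/-- the base part of the wreath action. -/
def bPart (f : G →* Perm β) : G × G →* Perm (Fin 2 × β) where
  toFun p := Equiv.prodCongrRight (fun i => if i = 0 then f p.1 else f p.2)
  map_one' := by
    ext ⟨i, x⟩
    · rfl
    · by_cases h : i = 0 <;> simp [Equiv.prodCongrRight_apply, h]
  map_mul' p q := by
    ext ⟨i, x⟩
    · rfl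
    · by_cases h : i = 0 <;>
        simp [Equiv.prodCongrRight_apply, h, Equiv.Perm.mul_apply]

lemma bPart_apply (f : G →* Perm β) (p : G × G) (i : Fin 2) (x : β) :
    bPart f p (i, x) = (i, if i = 0 then f p.1 x else f p.2 x) := by
  by_cases h : i = 0 <;> simp [bPart, Equiv.prodCongrRight_apply, h]

/-- the top part of the wreath action. -/
def tPermVal (β : Type*) : Perm (Fin 2 × β) :=
  Equiv.prodCongrLeft (fun _ : β => Equiv.swap 0 1)

lemma tPermVal_apply (i : Fin 2) (x : β) :
    tPermVal β (i, x) = (Equiv.swap 0 1 i, x) := rfl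

lemma tPermVal_sq : tPermVal β * tPermVal β = 1 := by
  ext ⟨i, x⟩
  · simp [Equiv.Perm.mul_apply, tPermVal_apply, Equiv.swap_apply_self]
  · rfl

def tPart (β : Type*) : ℤˣ →* Perm (Fin 2 × β) := invol (tPermVal β) tPermVal_sq

lemma tPermVal_inv : (tPermVal β)⁻¹ = tPermVal β :=
  inv_eq_of_mul_eq_one_right tPermVal_sq

lemma embSucc_compat (f : G →* Perm β) : ∀ u : ℤˣ,
    (bPart f).comp ((wphi G u).toMonoidHom)
      = (MulAut.conj (tPart β u)).toMonoidHom.comp (bPart f) := by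
  intro u
  rcases Int.units_eq_one_or u with h | h <;> subst h
  · ext p ⟨i, x⟩ <;> simp [bPart_apply, tPart]
  · ext p ⟨i, x⟩ <;> fin_cases i <;>
      simp [tPart, bPart_apply, tPermVal_inv, tPermVal_apply, Equiv.Perm.mul_apply,
        Equiv.swap_apply_left, Equiv.swap_apply_right]

/-- the embedding of `WD G` into permutations, given one of `G`. -/
def embSucc (f : G →* Perm β) : WD G →* Perm (Fin 2 × β) :=
  SemidirectProduct.lift (bPart f) (tPart β) (embSucc_compat f)

lemma embSucc_apply (f : G →* Perm β) (x : WD G) :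
    embSucc f x = bPart f x.left * tPart β x.right := rfl

lemma embSucc_injective [Nonempty β] {f : G →* Perm β} (hf : Function.Injective f) :
    Function.Injective (embSucc f) := by
  rw [injective_iff_map_eq_one]
  intro x hx
  have happ : ∀ i b, (bPart f x.left * tPart β x.right) (i, b) = (i, b) := by
    intro i b
    rw [← embSucc_apply, hx]
    rfl
  have hr : x.right = 1 := by
    rcases Int.units_eq_one_or x.right with h | h
    · exact h
    · exfalso
      obtain ⟨b⟩ := ‹Nonempty β›
      have h0 := happ 0 b
      rw [h] at h0
      simp only [tPart, invol_neg_one, Equiv.Perm.mul_apply, tPermVal_apply,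
        Equiv.swap_apply_left, bPart_apply] at h0
      have h2 := congrArg Prod.fst h0
      simp at h2
  rw [hr] at happ
  simp only [map_one, mul_one] at happ
  have h1 : x.left.1 = 1 := by
    refine (injective_iff_map_eq_one f).mp hf _ (Equiv.ext fun b => ?_)
    have := happ 0 b
    simp only [bPart_apply] at this
    simpa using congrArg Prod.snd this
  have h2 : x.left.2 = 1 := by
    refine (injective_iff_map_eq_one f).mp hf _ (Equiv.ext fun b => ?_)
    have := happ 1 b
    simp only [bPart_apply] at this
    simpa using congrArg Prod.snd this
  ext <;> simp [h1, h2, hr]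

lemma sign_embSucc [DecidableEq β] [Fintype β] (f : G →* Perm β) (x : WD G) :
    Equiv.Perm.sign (embSucc f x)
      = Equiv.Perm.sign (f x.left.1) * Equiv.Perm.sign (f x.left.2)
        * x.right ^ (Fintype.card β) := by
  rw [embSucc_apply, map_mul]
  have hb : Equiv.Perm.sign (bPart f x.left)
      = Equiv.Perm.sign (f x.left.1) * Equiv.Perm.sign (f x.left.2) := by
    have hrfl : bPart f x.left
        = Equiv.prodCongrRight (fun i => if i = 0 then f x.left.1 else f x.left.2) := rfl
    rw [hrfl, Equiv.Perm.sign_prodCongrRight, Fin.prod_univ_two]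
    norm_num
  have ht : Equiv.Perm.sign (tPart β x.right) = x.right ^ (Fintype.card β) := by
    rcases Int.units_eq_one_or x.right with h | h <;> rw [h]
    · simp
    · have hrfl : tPart β (-1) = Equiv.prodCongrLeft (fun _ : β => Equiv.swap 0 1) :=
        invol_neg_one _ _
      rw [hrfl, Equiv.Perm.sign_prodCongrLeft]
      rw [Finset.prod_const, Equiv.Perm.sign_swap (by decide)]
      simp
  rw [hb, ht]

end Emb

section TowerPart

open Equiv

/-- conjugation of permutations by an equivalence, as a hom. -/
def permCongrHom {α β' : Type*} (e : α ≃ β') : Perm α →* Perm β' where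
  toFun p := e.permCongr p
  map_one' := by ext x; simp
  map_mul' p q := by ext x; simp [Equiv.permCongr_apply, Equiv.Perm.mul_apply]

lemma permCongrHom_injective {α β' : Type*} (e : α ≃ β') :
    Function.Injective (_root_.permCongrHom e) :=
  e.permCongr.injective

lemma sign_permCongrHom {α β' : Type*} [DecidableEq α] [Fintype α]
    [DecidableEq β'] [Fintype β'] (e : α ≃ β') (p : Perm α) :
    Equiv.Perm.sign (_root_.permCongrHom e p) = Equiv.Perm.sign p :=
  Equiv.Perm.sign_permCongr e p

/-- the equivalence shuffling `Fin 2 × Fin (2^n)` to `Fin (2^(n+1))`. -/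
def treeEquiv (n : ℕ) : Fin 2 × Fin (2 ^ n) ≃ Fin (2 ^ (n + 1)) :=
  (finProdFinEquiv).trans (finCongr (by rw [pow_succ]; ring))

/-- data of one level of the tower of iterated wreath products. -/
structure TowerData (n : ℕ) where
  G : Type
  [grp : Group G]
  emb : G →* Equiv.Perm (Fin (2 ^ n))

attribute [instance] TowerData.grp

/-- the tower of iterated wreath products of `C₂`, with their embeddings as
permutation groups: level `n` is a Sylow 2-subgroup of `S_{2^n}`. -/
def tower : (n : ℕ) → TowerData n
  | 0 => { G := PUnit, emb := 1 }
  | n + 1 =>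
    { G := WD (tower n).G,
      emb := (_root_.permCongrHom (treeEquiv n)).comp (embSucc (tower n).emb) }

lemma tower_succ_G (n : ℕ) : (tower (n + 1)).G = WD (tower n).G := rfl

lemma tower_card : ∀ n, Nat.card (tower n).G = 2 ^ (2 ^ n - 1)
  | 0 => by
    show Nat.card PUnit = _
    simp
  | n + 1 => by
    show Nat.card (WD (tower n).G) = _
    rw [card_WD, tower_card n]
    have h1 : 1 ≤ 2 ^ n := Nat.one_le_two_pow
    have h2 : 2 ^ (n + 1) = 2 * 2 ^ n := by rw [pow_succ]; ring
    rw [← pow_add, ← pow_succ]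
    congr 1
    omega

lemma tower_comm_card : ∀ n, Nat.card (commutator (tower n).G) = 2 ^ (2 ^ n - 1 - n)
  | 0 => by
    haveI : Subsingleton (tower 0).G := inferInstanceAs (Subsingleton PUnit)
    have h : Nat.card (commutator (tower 0).G) = 1 := by
      refine Nat.card_eq_one_iff_unique.mpr ⟨?_, inferInstance⟩
      constructor
      intro a b
      ext
      exact Subsingleton.elim _ _
    rw [h]
    norm_num
  | n + 1 => by
    show Nat.card (commutator (WD (tower n).G)) = _
    rw [commutator_WD, card_DA, tower_card n, tower_comm_card n]
    have h1 : n + 1 ≤ 2 ^ n := Nat.lt_two_pow_self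
    have h2 : 2 ^ (n + 1) = 2 * 2 ^ n := by rw [pow_succ]; ring
    rw [← pow_add]
    congr 1
    omega

lemma tower_inj : ∀ n, Function.Injective (tower n).emb
  | 0 => fun a b _ => by
    haveI : Subsingleton (tower 0).G := inferInstanceAs (Subsingleton PUnit)
    exact Subsingleton.elim a b
  | n + 1 => by
    show Function.Injective ((_root_.permCongrHom (treeEquiv n)).comp (embSucc (tower n).emb))
    exact (permCongrHom_injective _).comp (embSucc_injective (tower_inj n))

lemma tower_sign (n : ℕ) (g : WD (tower n).G) :
    Equiv.Perm.sign ((tower (n + 1)).emb g)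
      = Equiv.Perm.sign ((tower n).emb g.left.1)
        * Equiv.Perm.sign ((tower n).emb g.left.2) * g.right ^ (2 ^ n) := by
  show Equiv.Perm.sign ((_root_.permCongrHom (treeEquiv n)) (embSucc (tower n).emb g)) = _
  rw [sign_permCongrHom, sign_embSucc, Fintype.card_fin]

end TowerPart

section Signs

lemma WD_finite {G : Type*} [Group G] [Finite G] : Finite (WD G) :=
  Finite.of_equiv _ sdEquivProd.symm

instance tower_finite : ∀ n, Finite (tower n).G := by
  intro n
  induction n with
  | zero => exact inferInstanceAs (Finite PUnit.{1})
  | succ m ih => exact @WD_finite _ _ ih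

/-- the sign character on the `n`-th wreath power. -/
def sHom (n : ℕ) : (tower n).G →* ℤˣ := (Equiv.Perm.sign).comp (tower n).emb

lemma sHom_succ_eq (n : ℕ) (hn : 1 ≤ n) (g : WD (tower n).G) :
    sHom (n + 1) g = sHom n g.left.1 * sHom n g.left.2 := by
  show Equiv.Perm.sign ((tower (n + 1)).emb g) = _
  rw [tower_sign]
  have h2 : g.right ^ (2 ^ n) = 1 := by
    obtain ⟨m, hm⟩ : ∃ m, 2 ^ n = 2 * m := ⟨2 ^ (n - 1), by
      rw [← pow_succ']
      congr 1
      omega⟩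
    rw [hm, pow_mul]
    rcases Int.units_eq_one_or g.right with h | h <;> rw [h] <;> norm_num
  rw [h2, mul_one]
  rfl

lemma sumHom_sHom (n : ℕ) (hn : 1 ≤ n) (g : WD (tower n).G) :
    sumHom (sHom n) g = sHom (n + 1) g :=
  (sHom_succ_eq n hn g).symm

lemma sHom_surj : ∀ n, 1 ≤ n → Function.Surjective (sHom n) := by
  intro n
  induction n with
  | zero => omega
  | succ m ih =>
    intro _
    rcases Nat.eq_zero_or_pos m with hm | hm
    · subst hm
      intro u
      rcases Int.units_eq_one_or u with h | h <;> subst h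
      · exact ⟨1, map_one _⟩
      · refine ⟨tt (tower 0).G, ?_⟩
        show Equiv.Perm.sign ((tower 1).emb (tt (tower 0).G)) = -1
        rw [tower_sign]
        simp [tt]
    · intro u
      obtain ⟨g, hg⟩ := ih hm u
      refine ⟨inl (g, 1), ?_⟩
      rw [sHom_succ_eq m hm]
      show sHom m g * sHom m 1 = u
      simp [hg]

end Signs

section Arith

lemma sum_two_pow (k : ℕ) : ∑ j ∈ Finset.range k, 2 ^ j = 2 ^ k - 1 := by
  induction k with
  | zero => simp
  | succ m ih =>
    rw [Finset.sum_range_succ, ih]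
    have : 1 ≤ 2 ^ m := Nat.one_le_two_pow
    have h2 : 2 ^ (m + 1) = 2 * 2 ^ m := by rw [pow_succ]; ring
    omega

lemma v2_factorial (k : ℕ) : ((2 ^ k).factorial).factorization 2 = 2 ^ k - 1 := by
  haveI : Fact (Nat.Prime 2) := ⟨Nat.prime_two⟩
  rw [Nat.factorization_def _ Nat.prime_two]
  rw [padicValNat_factorial (p := 2) (n := 2 ^ k) (b := k + 1)
    (by rw [Nat.log_pow (by norm_num)]; omega)]
  rw [Finset.sum_Ico_eq_sum_range]
  simp only [Nat.add_sub_cancel]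
  have h1 : ∀ i ∈ Finset.range k, 2 ^ k / 2 ^ (1 + i) = 2 ^ (k - 1 - i) := by
    intro i hi
    rw [Finset.mem_range] at hi
    rw [Nat.pow_div (by omega) (by norm_num)]
    congr 1
    omega
  rw [Finset.sum_congr rfl h1, Finset.sum_range_reflect (fun j => 2 ^ j) k, sum_two_pow]

end Arith

/-- for `k ≥ 2`, a Sylow 2-subgroup of `A_{2^k}` has order
`2^(2^k - 2)` and its commutator subgroup has order `2^(2^k - k - 2)`. -/
theorem card_sylow_alt_and_commutator (k : ℕ) (hk : 2 ≤ k)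
    (P : Sylow 2 (alternatingGroup (Fin (2 ^ k)))) :
    Nat.card ↥P = 2 ^ (2 ^ k - 2) ∧
      Nat.card ↥(commutator ↥P) = 2 ^ (2 ^ k - k - 2) := by
  haveI : Fact (Nat.Prime 2) := ⟨Nat.prime_two⟩
  obtain ⟨n, rfl⟩ : ∃ n, k = n + 1 := ⟨k - 1, by omega⟩
  have hn : 1 ≤ n := by omega
  have hpow2 : 2 ≤ 2 ^ n := by
    calc 2 = 2 ^ 1 := rfl
    _ ≤ 2 ^ n := Nat.pow_le_pow_right (by norm_num) hn
  have hpow2' : 2 ≤ 2 ^ (n + 1) := by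
    have h2 : 2 ^ (n + 1) = 2 * 2 ^ n := by rw [pow_succ]; ring
    omega
  haveI : Finite (WD (tower n).G) := @WD_finite _ _ (tower_finite n)
  set s : (tower n).G →* ℤˣ := sHom n with hs
  set K : Subgroup (WD (tower n).G) := KK s with hK
  have hsign : ∀ x : WD (tower n).G,
      Equiv.Perm.sign ((tower (n + 1)).emb x) = sumHom s x := by
    intro x
    exact (sumHom_sHom n hn x).symm
  let emb1 : WD (tower n).G →* Equiv.Perm (Fin (2 ^ (n + 1))) := (tower (n + 1)).emb
  let ψ : K →* alternatingGroup (Fin (2 ^ (n + 1))) :=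
    MonoidHom.codRestrict (emb1.comp K.subtype) _ (fun x => by
      rw [Equiv.Perm.mem_alternatingGroup]
      show Equiv.Perm.sign ((tower (n + 1)).emb x.1) = 1
      rw [hsign x.1]
      exact x.2)
  have hψinj : Function.Injective ψ := by
    intro a b h
    apply Subtype.ext
    apply tower_inj (n + 1)
    exact congrArg Subtype.val h
  have e1 : ↥K ≃* ψ.range := MonoidHom.ofInjective hψinj
  have hcardW : Nat.card (WD (tower n).G) = 2 ^ (2 ^ (n + 1) - 1) := tower_card (n + 1)
  have hSsurj : Function.Surjective (sumHom s) := by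
    intro u
    obtain ⟨g, hg⟩ := sHom_surj n hn u
    exact ⟨inl (g, 1), by show s g * s 1 = u; simp [hs, hg]⟩
  have hcardK : Nat.card K = 2 ^ (2 ^ (n + 1) - 2) := by
    have h : Nat.card K * 2 = Nat.card (WD (tower n).G) :=
      card_ker_of_surjective (sumHom s) hSsurj
    rw [hcardW] at h
    have h3 : 2 ^ (2 ^ (n + 1) - 1) = 2 ^ (2 ^ (n + 1) - 2) * 2 := by
      rw [← pow_succ]
      congr 1
      omega
    omega
  haveI : Nontrivial (Fin (2 ^ (n + 1))) :=
    ⟨⟨0, by omega⟩, ⟨1, by omega⟩, by simp [Fin.ext_iff]⟩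
  have h2A : 2 * Nat.card (alternatingGroup (Fin (2 ^ (n + 1)))) = (2 ^ (n + 1)).factorial := by
    rw [Nat.card_eq_fintype_card, two_mul_card_alternatingGroup,
      Fintype.card_perm, Fintype.card_fin]
  have hA0 : Nat.card (alternatingGroup (Fin (2 ^ (n + 1)))) ≠ 0 := Nat.card_pos.ne'
  have hvA : (Nat.card (alternatingGroup (Fin (2 ^ (n + 1))))).factorization 2 = 2 ^ (n + 1) - 2 := by
    have hfac := congrArg (fun f => f 2)
      (Nat.factorization_mul (by norm_num : (2 : ℕ) ≠ 0) hA0)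
    simp only [Finsupp.add_apply] at hfac
    rw [h2A, v2_factorial (n + 1), Nat.Prime.factorization_self Nat.prime_two] at hfac
    omega
  have hcardQ : Nat.card ψ.range = 2 ^ ((Nat.card (alternatingGroup (Fin (2 ^ (n + 1))))).factorization 2) := by
    rw [hvA, ← hcardK]
    exact (Nat.card_congr e1.toEquiv).symm
  let Qs : Sylow 2 ↥(alternatingGroup (Fin (2 ^ (n + 1)))) := Sylow.ofCard ψ.range hcardQ
  have e2 : ↥Qs ≃* ↥P := Sylow.equiv Qs P
  have hcardP : Nat.card ↥P = 2 ^ (2 ^ (n + 1) - 2) := by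
    calc Nat.card ↥P = Nat.card ↥Qs := (Nat.card_congr e2.toEquiv).symm
      _ = Nat.card ↥K := (Nat.card_congr e1.toEquiv).symm
      _ = 2 ^ (2 ^ (n + 1) - 2) := hcardK
  refine ⟨hcardP, ?_⟩
  have hker : Nat.card s.ker = 2 ^ (2 ^ n - 2) := by
    have h : Nat.card s.ker * 2 = Nat.card (tower n).G :=
      card_ker_of_surjective s (sHom_surj n hn)
    rw [tower_card n] at h
    have h3 : 2 ^ (2 ^ n - 1) = 2 ^ (2 ^ n - 2) * 2 := by
      rw [← pow_succ]
      congr 1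
      omega
    omega
  calc Nat.card (commutator ↥P)
      = Nat.card (commutator ↥Qs) := (card_commutator_congr e2).symm
    _ = Nat.card (commutator ↥K) := (card_commutator_congr e1).symm
    _ = Nat.card (⁅K, K⁆ : Subgroup (WD (tower n).G)) := card_commutator_subgroup K
    _ = Nat.card (DB s) := by rw [hK, commutator_KK]
    _ = Nat.card s.ker * Nat.card (commutator (tower n).G) := card_DB s
    _ = 2 ^ (2 ^ n - 2) * 2 ^ (2 ^ n - 1 - n) := by rw [hker, tower_comm_card n]
    _ = 2 ^ (2 ^ (n + 1) - (n + 1) - 2) := by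
        rw [← pow_add]
        congr 1
        have ha : n + 1 ≤ 2 ^ n := Nat.lt_two_pow_self
        have h2 : 2 ^ (n + 1) = 2 * 2 ^ n := by rw [pow_succ]; ring
        omega
end
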